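/- arXiv:2112.06664 — 8 statements merged into one kernel-verified Lean document; each statement's English description precedes it below -/
import Mathlib

section
/- For every τ > 0, every n ∈ ℕ, every φ ∈ Φ, and every bounded nondecreasing right-continuous function v : [0,τ] → ℝ that is not constant on [0,τ], one has I_{n,φ}(τ,v) · E_n(A) ≤ (v(τ) − v(0)) · ω_φ(A, τ/λ_n), where I_{n,φ}(τ,v) := inf_{k ∈ ℕ, k ≥ n} ∫_{[0,τ]} φ(λ_k t / λ_n) dv(t) (the integral taken with respect to the Lebesgue–Stieltjes measure of v). Equivalently, E_n(A) ≤ K_{n,φ}(τ) · ω_φ(A, τ/λ_n) with K_{n,φ}(τ) := inf over all such v of (v(τ) − v(0))/I_{n,φ}(τ,v) (the ratio interpreted as +∞ when I_{n,φ}(τ,v) = 0). -/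
open MeasureTheory Real Filter Finset intervalIntegral
open scoped ENNReal Topology

noncomputable section

/-- `M` is an Orlicz function: nondecreasing and convex on `[0,∞)`, `M 0 = 0`,
and `M t → ∞` as `t → ∞`. -/
def IsOrlicz (M : ℝ → ℝ) : Prop :=
  MonotoneOn M (Set.Ici 0) ∧ ConvexOn ℝ (Set.Ici 0) M ∧ M 0 = 0 ∧
    Filter.Tendsto M Filter.atTop Filter.atTop

/-- The Legendre conjugate `M*(v) = sup {uv - M u : u ≥ 0}`, valued in `[0,∞]`. -/
def Mstar (M : ℝ → ℝ) (v : ℝ) : ℝ≥0∞ :=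
  ⨆ (u : ℝ) (_ : 0 ≤ u), ENNReal.ofReal (u * v - M u)

/-- The set `Γ` of positive sequences `γ` with `Σ_k M_k^*(γ_k) ≤ 1`. -/
def GammaSet (M : ℤ → ℝ → ℝ) : Set (ℤ → ℝ) :=
  {γ | (∀ k, 0 < γ k) ∧ ∑' k : ℤ, Mstar (M k) (γ k) ≤ 1}

/-- The Orlicz norm `‖A‖_M = sup_{γ ∈ Γ} Σ_k γ_k |A_k|` of a sequence of
Fourier coefficients, valued in `[0,∞]`. -/
def orliczNorm (M : ℤ → ℝ → ℝ) (A : ℤ → ℂ) : ℝ≥0∞ :=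
  ⨆ γ ∈ GammaSet M, ∑' k : ℤ, ENNReal.ofReal (γ k * ‖A k‖)

/-- The best approximation `E_n(A) = sup_{γ ∈ Γ} Σ_{|k| ≥ n} γ_k |A_k|`. -/
def bestE (M : ℤ → ℝ → ℝ) (A : ℤ → ℂ) (n : ℕ) : ℝ≥0∞ :=
  ⨆ γ ∈ GammaSet M, ∑' k : ℤ,
    if (n : ℤ) ≤ |k| then ENNReal.ofReal (γ k * ‖A k‖) else 0

/-- The generalized modulus of smoothness
`ω_φ(A, δ) = sup_{|h| ≤ δ} sup_{γ ∈ Γ} Σ_k γ_k φ(λ_k h) |A_k|`. -/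
def genMod (Λ : ℤ → ℝ) (M : ℤ → ℝ → ℝ) (A : ℤ → ℂ) (φ : ℝ → ℝ) (δ : ℝ) : ℝ≥0∞ :=
  ⨆ (h : ℝ) (_ : |h| ≤ δ), ⨆ γ ∈ GammaSet M, ∑' k : ℤ,
    ENNReal.ofReal (γ k * φ (Λ k * h) * ‖A k‖)

/-- The class `Φ`: continuous bounded nonnegative even functions vanishing at `0`
whose zero set has Lebesgue measure zero. -/
def IsPhi (φ : ℝ → ℝ) : Prop :=
  Continuous φ ∧ (∃ C, ∀ t, φ t ≤ C) ∧ (∀ t, 0 ≤ φ t) ∧ φ 0 = 0 ∧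
    (∀ t, φ (-t) = φ t) ∧ MeasureTheory.volume {t : ℝ | φ t = 0} = 0

/-- A symmetric sequence of Fourier exponents: `λ_0 = 0`, `λ_{-k} = -λ_k`,
and `0 < λ_k < λ_{k+1}` for `k ≥ 1`. -/
def IsExponents (Λ : ℤ → ℝ) : Prop :=
  Λ 0 = 0 ∧ (∀ k, Λ (-k) = -Λ k) ∧ (∀ k : ℤ, 1 ≤ k → 0 < Λ k) ∧
    (∀ k : ℤ, 1 ≤ k → Λ k < Λ (k + 1))

/-- `φ_α(t) = 2^{α/2} (1 - cos t)^{α/2}`, so that `ω_{φ_α} = ω_α`. -/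
def phiAlpha (α : ℝ) (t : ℝ) : ℝ := 2 ^ (α / 2) * (1 - Real.cos t) ^ (α / 2)

/-- `sinc t = sin t / t` for `t ≠ 0`, `sinc 0 = 1`. -/
def sincFn (t : ℝ) : ℝ := if t = 0 then 1 else Real.sin t / t

/-- `φ̃_m(t) = (1 - sinc t)^m`, so that `ω_{φ̃_m} = ω̃_m`. -/
def phiTilde (m : ℕ) (t : ℝ) : ℝ := (1 - sincFn t) ^ m

/-- **Theorem 1 (direct theorem, sharp form).** For every `τ > 0`, `n ∈ ℕ`, `φ ∈ Φ` and
every bounded nondecreasing right-continuous `v` that is not constant on `[0,τ]`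
(equivalently, `v 0 < v τ`), one has
`I_{n,φ}(τ,v) · E_n(A) ≤ (v τ - v 0) · ω_φ(A, τ/λ_n)`. -/
theorem direct_theorem_stieltjes
    (Λ : ℤ → ℝ) (M : ℤ → ℝ → ℝ) (A : ℤ → ℂ)
    (hΛ : IsExponents Λ) (hM : ∀ k, IsOrlicz (M k)) (hA : orliczNorm M A ≠ ⊤)
    (τ : ℝ) (hτ : 0 < τ) (n : ℕ) (hn : 1 ≤ n) (φ : ℝ → ℝ) (hφ : IsPhi φ)
    (v : StieltjesFunction ℝ) (hvnc : v 0 < v τ) :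
    (⨅ (k : ℕ) (_ : n ≤ k),
        ∫⁻ t in Set.Icc (0 : ℝ) τ, ENNReal.ofReal (φ (Λ k * t / Λ n)) ∂v.measure)
        * bestE M A n
      ≤ ENNReal.ofReal (v τ - v 0) * genMod Λ M A φ (τ / Λ n) := by
  obtain ⟨hΛ0, hΛneg, hΛpos, hΛmono⟩ := hΛ
  obtain ⟨hφc, hφb, hφnn, hφ0, hφeven, hφz⟩ := hφ
  have hn' : (0:ℝ) < Λ (n : ℤ) := hΛpos n (by exact_mod_cast hn)
  set c := genMod Λ M A φ (τ / Λ n) with hc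
  set I := ⨅ (k : ℕ) (_ : n ≤ k),
      ∫⁻ t in Set.Icc (0 : ℝ) τ, ENNReal.ofReal (φ (Λ k * t / Λ n)) ∂v.measure with hI
  rw [bestE, ENNReal.mul_iSup]
  refine iSup_le fun γ => ?_
  rw [ENNReal.mul_iSup]
  refine iSup_le fun hγ => ?_
  have hmeas : ∀ k : ℤ, Measurable fun t : ℝ =>
      ENNReal.ofReal (γ k * φ (Λ k * t / Λ n) * ‖A k‖) := by
    intro k
    exact (((continuous_const.mul (hφc.comp
      ((continuous_const.mul continuous_id).div_const _))).mul
      continuous_const).measurable).ennreal_ofReal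
  have key : ∀ k : ℤ,
      I * (if (n : ℤ) ≤ |k| then ENNReal.ofReal (γ k * ‖A k‖) else 0)
      ≤ ∫⁻ t in Set.Ioc (0:ℝ) τ,
          ENNReal.ofReal (γ k * φ (Λ k * t / Λ n) * ‖A k‖) ∂v.measure := by
    intro k
    by_cases hk : (n : ℤ) ≤ |k|
    · rw [if_pos hk]
      set m : ℕ := k.natAbs with hm
      have hmn : n ≤ m := by
        have := hk
        rw [Int.abs_eq_natAbs] at this
        exact_mod_cast this
      have hΛm : ∀ t : ℝ, φ (Λ m * t / Λ n) = φ (Λ k * t / Λ n) := by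
        intro t
        rcases le_or_gt 0 k with h | h
        · have : (m : ℤ) = k := by omega
          rw [this]
        · have hmk : (m : ℤ) = -k := by omega
          rw [hmk, hΛneg, show -Λ k * t / Λ n = -(Λ k * t / Λ n) by ring, hφeven]
      have hIle : I ≤ ∫⁻ t in Set.Icc (0:ℝ) τ,
          ENNReal.ofReal (φ (Λ k * t / Λ n)) ∂v.measure := by
        refine le_trans (iInf₂_le m hmn) (le_of_eq ?_)
        exact lintegral_congr fun t => by rw [hΛm t]
      have hIcc : ∫⁻ t in Set.Icc (0:ℝ) τ,
            ENNReal.ofReal (φ (Λ k * t / Λ n)) ∂v.measure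
          = ∫⁻ t in Set.Ioc (0:ℝ) τ,
            ENNReal.ofReal (φ (Λ k * t / Λ n)) ∂v.measure := by
        rw [← Set.Ioc_insert_left hτ.le,
          lintegral_insert (by simp) (fun t => ENNReal.ofReal (φ (Λ k * t / Λ n)))]
        simp [hφ0]
      calc I * ENNReal.ofReal (γ k * ‖A k‖)
          ≤ (∫⁻ t in Set.Ioc (0:ℝ) τ,
              ENNReal.ofReal (φ (Λ k * t / Λ n)) ∂v.measure)
            * ENNReal.ofReal (γ k * ‖A k‖) := by
            exact mul_le_mul_left (hIcc ▸ hIle) _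
        _ = ∫⁻ t in Set.Ioc (0:ℝ) τ,
              ENNReal.ofReal (γ k * φ (Λ k * t / Λ n) * ‖A k‖) ∂v.measure := by
            have hm2 : Measurable fun t : ℝ => ENNReal.ofReal (φ (Λ k * t / Λ n)) := by
              exact (hφc.comp
                ((continuous_const.mul continuous_id).div_const _)).measurable.ennreal_ofReal
            rw [← lintegral_mul_const _ hm2]
            refine lintegral_congr fun t => ?_
            rw [← ENNReal.ofReal_mul (hφnn _)]
            congr 1
            ring
    · rw [if_neg hk, mul_zero]
      exact zero_le
  calc I * ∑' k : ℤ, (if (n : ℤ) ≤ |k| then ENNReal.ofReal (γ k * ‖A k‖) else 0)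
      = ∑' k : ℤ, I * (if (n : ℤ) ≤ |k| then ENNReal.ofReal (γ k * ‖A k‖) else 0) :=
        (ENNReal.tsum_mul_left).symm
    _ ≤ ∑' k : ℤ, ∫⁻ t in Set.Ioc (0:ℝ) τ,
          ENNReal.ofReal (γ k * φ (Λ k * t / Λ n) * ‖A k‖) ∂v.measure :=
        ENNReal.tsum_le_tsum key
    _ = ∫⁻ t in Set.Ioc (0:ℝ) τ, ∑' k : ℤ,
          ENNReal.ofReal (γ k * φ (Λ k * t / Λ n) * ‖A k‖) ∂v.measure :=
        (lintegral_tsum fun k => (hmeas k).aemeasurable).symm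
    _ ≤ ∫⁻ _ in Set.Ioc (0:ℝ) τ, c ∂v.measure := by
        refine setLIntegral_mono measurable_const fun t ht => ?_
        have hh : |t / Λ n| ≤ τ / Λ n := by
          rw [abs_of_nonneg (div_nonneg ht.1.le hn'.le)]
          gcongr
          exact ht.2
        calc ∑' k : ℤ, ENNReal.ofReal (γ k * φ (Λ k * t / Λ n) * ‖A k‖)
            = ∑' k : ℤ, ENNReal.ofReal (γ k * φ (Λ k * (t / Λ n)) * ‖A k‖) := by
              refine tsum_congr fun k => by rw [mul_div_assoc]
          _ ≤ c := by
              rw [hc, genMod]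
              exact le_iSup₂_of_le (t / Λ n) hh (le_iSup₂_of_le γ hγ le_rfl)
    _ = c * v.measure (Set.Ioc 0 τ) := setLIntegral_const _ _
    _ = ENNReal.ofReal (v τ - v 0) * c := by rw [v.measure_Ioc, mul_comm]

end
end

section
/- For every τ > 0, every n ∈ ℕ, every φ ∈ Φ, and every bounded nondecreasing right-continuous function v : [0,τ] → ℝ, one has I_{n,φ}(τ,v) · E_n(A) ≤ ∫_{[0,τ]} ω_φ(A, u/λ_n) dv(u), where I_{n,φ}(τ,v) := inf_{k ∈ ℕ, k ≥ n} ∫_{[0,τ]} φ(λ_k t / λ_n) dv(t) and the integrals are taken with respect to the Lebesgue–Stieltjes measure of v. -/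
open MeasureTheory Real Filter Finset intervalIntegral
open scoped ENNReal Topology

noncomputable section

/-- For every `τ > 0`, `n ∈ ℕ`, `φ ∈ Φ` and every bounded nondecreasing
right-continuous `v`, one has `I_{n,φ}(τ,v) · E_n(A) ≤ ∫_{[0,τ]} ω_φ(A, u/λ_n) dv(u)`. -/
theorem direct_theorem_integral_form
    (Λ : ℤ → ℝ) (M : ℤ → ℝ → ℝ) (A : ℤ → ℂ)
    (hΛ : IsExponents Λ) (hM : ∀ k, IsOrlicz (M k)) (hA : orliczNorm M A ≠ ⊤)
    (τ : ℝ) (hτ : 0 < τ) (n : ℕ) (hn : 1 ≤ n) (φ : ℝ → ℝ) (hφ : IsPhi φ)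
    (v : StieltjesFunction ℝ) :
    (⨅ (k : ℕ) (_ : n ≤ k),
        ∫⁻ t in Set.Icc (0 : ℝ) τ, ENNReal.ofReal (φ (Λ k * t / Λ n)) ∂v.measure)
        * bestE M A n
      ≤ ∫⁻ u in Set.Icc (0 : ℝ) τ, genMod Λ M A φ (u / Λ n) ∂v.measure := by

  obtain ⟨hφc, hφbd, hφ0, hφzero, hφeven, hφnull⟩ := hφ
  have hΛn : 0 < Λ ((n : ℕ) : ℤ) := hΛ.2.2.1 _ (by exact_mod_cast hn)
  rw [bestE, ENNReal.mul_iSup]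
  refine iSup_le fun γ => ?_
  rw [ENNReal.mul_iSup]
  refine iSup_le fun hγ => ?_
  set I : ℝ≥0∞ := ⨅ (k : ℕ) (_ : n ≤ k),
      ∫⁻ t in Set.Icc (0 : ℝ) τ, ENNReal.ofReal (φ (Λ k * t / Λ n)) ∂v.measure with hIdef
  set f : ℤ → ℝ≥0∞ := fun k =>
    if (n : ℤ) ≤ |k| then ENNReal.ofReal (γ k * ‖A k‖) else 0 with hfdef
  have hmeas : ∀ k : ℤ, Measurable fun u : ℝ => ENNReal.ofReal (φ (Λ k * u / Λ n)) := by
    intro k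
    exact (hφc.comp (by continuity)).measurable.ennreal_ofReal
  calc I * ∑' k, f k = ∑' k, I * f k := ENNReal.tsum_mul_left.symm
    _ ≤ ∑' k, (∫⁻ u in Set.Icc (0:ℝ) τ,
          ENNReal.ofReal (φ (Λ k * u / Λ n)) ∂v.measure) * f k := by
        refine ENNReal.tsum_le_tsum fun k => ?_
        by_cases hk : (n : ℤ) ≤ |k|
        · refine mul_le_mul_left ?_ _
          have hk' : n ≤ k.natAbs := by
            rw [Int.abs_eq_natAbs] at hk; exact_mod_cast hk
          have heq : ∀ t : ℝ, φ (Λ ((k.natAbs : ℕ) : ℤ) * t / Λ n) = φ (Λ k * t / Λ n) := by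
            intro t
            rcases le_or_gt 0 k with hk0 | hk0
            · congr 3
              congr 1
              omega
            · have hna : ((k.natAbs : ℕ) : ℤ) = -k := by omega
              rw [hna, hΛ.2.1 k,
                show -Λ k * t / Λ ((n : ℕ) : ℤ) = -(Λ k * t / Λ ((n : ℕ) : ℤ)) by ring]
              exact hφeven _
          calc I ≤ ∫⁻ t in Set.Icc (0:ℝ) τ,
                ENNReal.ofReal (φ (Λ (k.natAbs : ℕ) * t / Λ n)) ∂v.measure := by
                  exact iInf₂_le k.natAbs hk'
            _ = ∫⁻ t in Set.Icc (0:ℝ) τ,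
                ENNReal.ofReal (φ (Λ k * t / Λ n)) ∂v.measure := by
                  refine lintegral_congr fun t => ?_
                  rw [heq t]
        · simp [hfdef, hk]
    _ = ∑' k, ∫⁻ u in Set.Icc (0:ℝ) τ,
          ENNReal.ofReal (φ (Λ k * u / Λ n)) * f k ∂v.measure := by
        exact tsum_congr fun k => (lintegral_mul_const _ (hmeas k)).symm
    _ = ∫⁻ u in Set.Icc (0:ℝ) τ, ∑' k,
          ENNReal.ofReal (φ (Λ k * u / Λ n)) * f k ∂v.measure := by
        exact (lintegral_tsum fun k => ((hmeas k).mul_const _).aemeasurable).symm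
    _ ≤ ∫⁻ u in Set.Icc (0:ℝ) τ, genMod Λ M A φ (u / Λ n) ∂v.measure := by
        refine lintegral_mono_ae (((ae_restrict_iff' measurableSet_Icc).2
          (ae_of_all _ fun u hu => ?_)))
        have habs : |u / Λ ((n : ℕ) : ℤ)| ≤ u / Λ n :=
          le_of_eq (abs_of_nonneg (div_nonneg hu.1 hΛn.le))
        have step1 : (∑' k, ENNReal.ofReal (φ (Λ k * u / Λ n)) * f k)
            ≤ ∑' k : ℤ, ENNReal.ofReal (γ k * φ (Λ k * (u / Λ n)) * ‖A k‖) := by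
          refine ENNReal.tsum_le_tsum fun k => ?_
          by_cases hk : (n : ℤ) ≤ |k|
          · refine le_of_eq ?_
            simp only [hfdef, if_pos hk]
            rw [← ENNReal.ofReal_mul (hφ0 _)]
            congr 1
            rw [mul_div_assoc]
            ring
          · simp [hfdef, hk]
        refine step1.trans ?_
        unfold genMod
        exact le_iSup_of_le (u / Λ n) (le_iSup_of_le habs
          (le_iSup_of_le γ (le_iSup_of_le hγ le_rfl)))

end
end

section
/- Fix n ∈ ℕ and suppose A_k = 0 for every k ∈ ℤ with k ∉ {−n, 0, n}. Then for every α > 0 one has the exact equality E_n(A) = ((α/2 + 1)/2^{α+1}) · ∫_0^π ω_α(A, t/λ_n) sin t dt. In particular the constant (α/2+1)/2^{α+1} in the Jackson-type inequality E_n(A) ≤ ((α/2+1)/2^{α+1})·∫_0^π ω_α(A, t/λ_n) sin t dt cannot be improved. -/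
open MeasureTheory Real Filter Finset intervalIntegral
open scoped ENNReal Topology

noncomputable section

lemma my_tsum_support_pair {f : ℤ → ℝ≥0∞} (N : ℤ) (hN : 1 ≤ N)
    (h : ∀ k, k ≠ -N → k ≠ N → f k = 0) :
    ∑' k, f k = f (-N) + f N := by
  rw [tsum_eq_sum (s := {-N, N}) ?_]
  · rw [Finset.sum_pair (by omega : -N ≠ N)]
  · intro k hk
    simp only [Finset.mem_insert, Finset.mem_singleton] at hk
    push_neg at hk
    exact h k hk.1 hk.2

lemma phiAlpha_eq_abs (α : ℝ) (t : ℝ) :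
    phiAlpha α t = 2 ^ α * |Real.sin (t / 2)| ^ α := by
  have h1 : 1 - Real.cos t = 2 * Real.sin (t / 2) ^ 2 := by
    have h := Real.sin_sq_eq_half_sub (t / 2)
    have h2 : 2 * (t / 2) = t := by ring
    rw [h2] at h
    linarith
  have h2 : ((Real.sin (t/2)) ^ 2 : ℝ) ^ (α/2) = |Real.sin (t/2)| ^ α := by
    rw [← sq_abs, ← Real.rpow_natCast |Real.sin (t/2)| 2,
      ← Real.rpow_mul (abs_nonneg _)]
    norm_num
    congr 1
    ring
  rw [phiAlpha, h1, Real.mul_rpow (by norm_num) (sq_nonneg _), h2,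
    ← mul_assoc, ← Real.rpow_add (by norm_num : (0:ℝ) < 2)]
  ring_nf

lemma phiAlpha_nonneg (α t : ℝ) : 0 ≤ phiAlpha α t := by
  rw [phiAlpha_eq_abs]
  positivity

lemma phiAlpha_zero (α : ℝ) (hα : 0 < α) : phiAlpha α 0 = 0 := by
  rw [phiAlpha_eq_abs]
  simp [Real.zero_rpow hα.ne']

lemma phiAlpha_neg (α t : ℝ) : phiAlpha α (-t) = phiAlpha α t := by
  rw [phiAlpha, phiAlpha, Real.cos_neg]

lemma abs_sin_le_sin {x y : ℝ} (h : |x| ≤ y) (hy : y ≤ π / 2) :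
    |Real.sin x| ≤ Real.sin y := by
  have h0 : 0 ≤ y := (abs_nonneg x).trans h
  have hmem : x ∈ Set.Icc (-(π/2)) (π/2) := by
    rw [abs_le] at h
    constructor <;> nlinarith
  have hymem : y ∈ Set.Icc (-(π/2)) (π/2) := ⟨by nlinarith [Real.pi_pos], hy⟩
  have hymem' : -y ∈ Set.Icc (-(π/2)) (π/2) := ⟨by nlinarith, by nlinarith⟩
  rw [abs_le] at h
  rw [abs_le]
  constructor
  · have := Real.strictMonoOn_sin.monotoneOn hymem' hmem h.1
    rwa [Real.sin_neg] at this
  · exact Real.strictMonoOn_sin.monotoneOn hmem hymem h.2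

lemma phiAlpha_le (α : ℝ) (hα : 0 < α) {u t : ℝ} (hu : |u| ≤ t) (ht : t ≤ π) :
    phiAlpha α u ≤ 2 ^ α * Real.sin (t / 2) ^ α := by
  rw [phiAlpha_eq_abs]
  have h2 : |u / 2| ≤ t / 2 := by rw [abs_div, abs_two]; linarith
  have key : |Real.sin (u / 2)| ≤ Real.sin (t / 2) := abs_sin_le_sin h2 (by linarith)
  exact mul_le_mul_of_nonneg_left (Real.rpow_le_rpow (abs_nonneg _) key hα.le)
    (by positivity)

lemma my_integral_inner (α : ℝ) (hα : 0 < α) :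
    ∫ t in (0:ℝ)..π, Real.sin (t/2) ^ (α+1) * Real.cos (t/2) = 2 / (α+2) := by
  have hderiv : ∀ t ∈ Set.uIcc (0:ℝ) π,
      HasDerivAt (fun t : ℝ => (2/(α+2)) * Real.sin (t/2) ^ (α+2))
        (Real.sin (t/2) ^ (α+1) * Real.cos (t/2)) t := by
    intro t _
    have h1 : HasDerivAt (fun t : ℝ => Real.sin (t/2)) (Real.cos (t/2) * (1/2)) t := by
      have := (Real.hasDerivAt_sin (t/2)).comp t ((hasDerivAt_id t).div_const 2)
      simpa [Function.comp_def] using this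
    have h2 : HasDerivAt (fun x : ℝ => x ^ (α+2))
        ((α+2) * Real.sin (t/2) ^ (α+2-1)) (Real.sin (t/2)) :=
      Real.hasDerivAt_rpow_const (Or.inr (by linarith))
    have h3 := (h2.comp t h1).const_mul (2/(α+2))
    refine h3.congr_deriv ?_
    have : α + 2 - 1 = α + 1 := by ring
    rw [this]
    field_simp
  have hcont : Continuous fun t : ℝ => Real.sin (t/2) ^ (α+1) * Real.cos (t/2) := by
    apply Continuous.mul ?_ (by fun_prop)
    apply continuous_iff_continuousAt.mpr fun x => ?_
    exact (Real.continuousAt_rpow_const _ _ (Or.inr (by linarith))).comp (by fun_prop)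
  rw [intervalIntegral.integral_eq_sub_of_hasDerivAt hderiv
    (hcont.intervalIntegrable _ _)]
  simp [Real.zero_rpow (by linarith : α + 2 ≠ 0)]

lemma my_integral_full (α : ℝ) (hα : 0 < α) :
    ∫ t in (0:ℝ)..π, 2 ^ α * Real.sin (t/2) ^ α * Real.sin t
      = 2 ^ (α+1) * (2 / (α+2)) := by
  rw [← my_integral_inner α hα, ← intervalIntegral.integral_const_mul]
  apply intervalIntegral.integral_congr
  intro t ht
  show 2 ^ α * Real.sin (t/2) ^ α * Real.sin t
    = 2 ^ (α+1) * (Real.sin (t/2) ^ (α+1) * Real.cos (t/2))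
  rw [Set.uIcc_of_le Real.pi_pos.le] at ht
  have hs : 0 ≤ Real.sin (t/2) := Real.sin_nonneg_of_nonneg_of_le_pi
    (by linarith [ht.1]) (by linarith [ht.2, Real.pi_pos])
  have hsin : Real.sin t = 2 * Real.sin (t/2) * Real.cos (t/2) := by
    have := Real.sin_two_mul (t/2)
    rw [show 2 * (t/2) = t by ring] at this
    rw [this]
  rw [hsin]
  by_cases h0 : Real.sin (t/2) = 0
  · simp [h0, Real.zero_rpow hα.ne', Real.zero_rpow (by linarith : α + 1 ≠ 0)]
  · rw [Real.rpow_add_one h0, Real.rpow_add_one (by norm_num : (2:ℝ) ≠ 0)]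
    ring

/-- **Sharpness of Corollary 1.** If the coefficient sequence `A` is supported on
`{-n, 0, n}`, then for every `α > 0` the exact equality
`E_n(A) = ((α/2 + 1)/2^{α+1}) · ∫_0^π ω_α(A, t/λ_n) sin t dt` holds. -/
theorem jackson_sin_weight_sharp
    (Λ : ℤ → ℝ) (M : ℤ → ℝ → ℝ) (A : ℤ → ℂ)
    (hΛ : IsExponents Λ) (hM : ∀ k, IsOrlicz (M k)) (hA : orliczNorm M A ≠ ⊤)
    (n : ℕ) (hn : 1 ≤ n)
    (hsupp : ∀ k : ℤ, k ≠ -(n : ℤ) → k ≠ 0 → k ≠ (n : ℤ) → A k = 0)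
    (α : ℝ) (hα : 0 < α) :
    (bestE M A n).toReal
      = ((α / 2 + 1) / 2 ^ (α + 1)) *
          ∫ t in (0 : ℝ)..π, (genMod Λ M A (phiAlpha α) (t / Λ n)).toReal * Real.sin t := by
  obtain ⟨hΛ0, hΛneg, hΛpos, -⟩ := hΛ
  have hN1 : (1:ℤ) ≤ (n:ℤ) := by exact_mod_cast hn
  have hL : 0 < Λ (n:ℤ) := hΛpos _ hN1
  set E := bestE M A n with hEdef
  have hsum1 : ∀ γ : ℤ → ℝ,
      (∑' k : ℤ, if (n : ℤ) ≤ |k| then ENNReal.ofReal (γ k * ‖A k‖) else 0)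
        = ENNReal.ofReal (γ (-(n:ℤ)) * ‖A (-(n:ℤ))‖)
          + ENNReal.ofReal (γ (n:ℤ) * ‖A (n:ℤ)‖) := by
    intro γ
    rw [my_tsum_support_pair (n:ℤ) hN1 ?_]
    · rw [if_pos (by rw [abs_neg]; rw [abs_of_nonneg (by omega : (0:ℤ) ≤ (n:ℤ))]),
        if_pos (by rw [abs_of_nonneg (by omega : (0:ℤ) ≤ (n:ℤ))])]
    · intro k hk1 hk2
      by_cases hk0 : k = 0
      · subst hk0
        simp only [abs_zero]
        rw [if_neg (by omega)]
      · simp [hsupp k hk1 hk0 hk2]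
  have hsum2 : ∀ (γ : ℤ → ℝ) (h : ℝ),
      (∑' k : ℤ, ENNReal.ofReal (γ k * phiAlpha α (Λ k * h) * ‖A k‖))
        = ENNReal.ofReal (phiAlpha α (Λ (n:ℤ) * h)) *
          (ENNReal.ofReal (γ (-(n:ℤ)) * ‖A (-(n:ℤ))‖)
            + ENNReal.ofReal (γ (n:ℤ) * ‖A (n:ℤ)‖)) := by
    intro γ h
    rw [my_tsum_support_pair (n:ℤ) hN1 ?_]
    · have hneg : Λ (-(n:ℤ)) = -Λ (n:ℤ) := hΛneg _
      rw [hneg, show -Λ (n:ℤ) * h = -(Λ (n:ℤ) * h) by ring, phiAlpha_neg, mul_add]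
      congr 1 <;>
      · rw [← ENNReal.ofReal_mul (phiAlpha_nonneg _ _)]
        congr 1
        ring
    · intro k hk1 hk2
      by_cases hk0 : k = 0
      · subst hk0
        rw [hΛ0]
        simp [phiAlpha_zero α hα]
      · simp [hsupp k hk1 hk0 hk2]
  have hEeq : E = ⨆ γ ∈ GammaSet M,
      (ENNReal.ofReal (γ (-(n:ℤ)) * ‖A (-(n:ℤ))‖)
        + ENNReal.ofReal (γ (n:ℤ) * ‖A (n:ℤ)‖)) := by
    rw [hEdef]
    simp only [bestE]
    exact iSup_congr fun γ => iSup_congr fun _ => hsum1 γ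
  have hstep : ∀ h : ℝ, (⨆ γ ∈ GammaSet M, ∑' k : ℤ,
      ENNReal.ofReal (γ k * phiAlpha α (Λ k * h) * ‖A k‖))
        = ENNReal.ofReal (phiAlpha α (Λ (n:ℤ) * h)) * E := by
    intro h
    rw [hEeq]
    simp_rw [hsum2 _ h, ENNReal.mul_iSup]
  have hmod : ∀ t : ℝ, 0 ≤ t → t ≤ π →
      genMod Λ M A (phiAlpha α) (t / Λ (n:ℤ))
        = ENNReal.ofReal (2 ^ α * Real.sin (t/2) ^ α) * E := by
    intro t ht0 htπ
    have hs2 : 0 ≤ Real.sin (t/2) := Real.sin_nonneg_of_nonneg_of_le_pi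
      (by linarith) (by linarith [Real.pi_pos])
    have harg : Λ (n:ℤ) * (t / Λ (n:ℤ)) = t := by field_simp
    simp only [genMod]
    apply le_antisymm
    · refine iSup_le fun h => iSup_le fun hh => ?_
      rw [hstep h]
      refine mul_le_mul_left (ENNReal.ofReal_le_ofReal ?_) E
      refine phiAlpha_le α hα ?_ htπ
      rw [abs_mul, abs_of_nonneg hL.le]
      calc Λ (n:ℤ) * |h| ≤ Λ (n:ℤ) * (t / Λ (n:ℤ)) :=
            mul_le_mul_of_nonneg_left hh hL.le
        _ = t := harg
    · have h0 : |t / Λ (n:ℤ)| ≤ t / Λ (n:ℤ) := by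
        rw [abs_of_nonneg (by positivity)]
      calc ENNReal.ofReal (2 ^ α * Real.sin (t/2) ^ α) * E
          = ENNReal.ofReal (phiAlpha α (Λ (n:ℤ) * (t / Λ (n:ℤ)))) * E := by
            rw [harg, phiAlpha_eq_abs, abs_of_nonneg hs2]
        _ = ⨆ γ ∈ GammaSet M, ∑' k : ℤ,
              ENNReal.ofReal (γ k * phiAlpha α (Λ k * (t / Λ (n:ℤ))) * ‖A k‖) :=
            (hstep _).symm
        _ ≤ _ := le_iSup₂ (f := fun (h : ℝ) (_ : |h| ≤ t / Λ (n:ℤ)) =>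
              ⨆ γ ∈ GammaSet M, ∑' k : ℤ,
                ENNReal.ofReal (γ k * phiAlpha α (Λ k * h) * ‖A k‖))
              (t / Λ (n:ℤ)) h0
  have hEfin : E ≠ ⊤ := by
    refine ne_top_of_le_ne_top hA ?_
    rw [hEdef]
    simp only [bestE, orliczNorm]
    refine iSup_mono fun γ => iSup_mono fun _ => ENNReal.tsum_le_tsum fun k => ?_
    split_ifs
    · exact le_rfl
    · exact zero_le
  rw [intervalIntegral.integral_congr (g := fun t : ℝ =>
      E.toReal * (2 ^ α * Real.sin (t/2) ^ α * Real.sin t)) ?_]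
  · rw [intervalIntegral.integral_const_mul, my_integral_full α hα]
    have h1 : (0:ℝ) < 2 ^ (α+1) := Real.rpow_pos_of_pos (by norm_num) _
    have h2 : α + 2 ≠ 0 := by linarith
    field_simp
  · intro t ht
    rw [Set.uIcc_of_le Real.pi_pos.le] at ht
    show (genMod Λ M A (phiAlpha α) (t / Λ (n:ℤ))).toReal * Real.sin t = _
    have hs2 : 0 ≤ Real.sin (t/2) := Real.sin_nonneg_of_nonneg_of_le_pi
      (by linarith [ht.1]) (by linarith [ht.2, Real.pi_pos])
    rw [hmod t ht.1 ht.2, ENNReal.toReal_mul, ENNReal.toReal_ofReal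
      (mul_nonneg (Real.rpow_nonneg (by norm_num) _) (Real.rpow_nonneg hs2 _))]
    ring


end
end

section
/- For every positive integer m and every n ∈ ℕ: E_n(A) ≤ (π^{2m}/((2m)! K(m))) · ∫_0^π ω̃_m(A, u/λ_n) sin u du, where K(m) := Σ_{j=0}^m (−1)^j π^{2m−2j}/(2m−2j)! + (−1)^m, so that (2m)! K(m) = ∫_0^π u^{2m} sin u du. -/
open MeasureTheory Real Filter Finset intervalIntegral
open scoped ENNReal Topology

noncomputable section

-- ===== auxiliary lemmas =====

/-- helper: nonneg of functions with nonneg derivative -/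
lemma nonneg_of_deriv (f f' : ℝ → ℝ) (hd : ∀ x, HasDerivAt f (f' x) x)
    (h0 : f 0 = 0) (h' : ∀ x, 0 ≤ x → 0 ≤ f' x) : ∀ x, 0 ≤ x → 0 ≤ f x := by
  intro x hx
  have hmono : MonotoneOn f (Set.Ici (0:ℝ)) := by
    apply monotoneOn_of_deriv_nonneg (convex_Ici 0)
    · exact Continuous.continuousOn (continuous_iff_continuousAt.2 (fun y => (hd y).continuousAt))
    · intro y _
      exact ((hd y).differentiableAt).differentiableWithinAt
    · intro y hy
      rw [interior_Ici] at hy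
      rw [(hd y).deriv]
      exact h' y (le_of_lt hy)
  have := hmono (Set.mem_Ici.2 le_rfl) (Set.mem_Ici.2 hx) hx
  simpa [h0] using this

lemma sin_ge_cubic : ∀ x : ℝ, 0 ≤ x → x - x^3/6 ≤ sin x := by
  have := nonneg_of_deriv (fun x => sin x - (x - x^3/6)) (fun x => cos x - (1 - x^2/2))
    (fun x => by
      have h1 : HasDerivAt (fun x : ℝ => sin x) (cos x) x := Real.hasDerivAt_sin x
      have h2 : HasDerivAt (fun x : ℝ => x - x^3/6) (1 - x^2/2) x := by
        have := ((hasDerivAt_id x).sub (((hasDerivAt_pow 3 x)).div_const 6))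
        exact this.congr_deriv (by norm_num; ring)
      exact h1.sub h2)
    (by simp)
    (fun x _ => by nlinarith [Real.one_sub_sq_div_two_le_cos (x := x)])
  intro x hx; linarith [this x hx]

lemma cos_le_quartic : ∀ x : ℝ, 0 ≤ x → cos x ≤ 1 - x^2/2 + x^4/24 := by
  have := nonneg_of_deriv (fun x => (1 - x^2/2 + x^4/24) - cos x)
    (fun x => sin x - (x - x^3/6))
    (fun x => by
      have h1 : HasDerivAt (fun x : ℝ => 1 - x^2/2 + x^4/24) (-x + x^3/6) x := by
        have := (((hasDerivAt_pow 2 x).div_const 2).const_sub 1).add ((hasDerivAt_pow 4 x).div_const 24)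
        exact this.congr_deriv (by norm_num; ring)
      have h2 : HasDerivAt (fun x : ℝ => cos x) (-sin x) x := Real.hasDerivAt_cos x
      exact (h1.sub h2).congr_deriv (by ring))
    (by simp)
    (fun x hx => by linarith [sin_ge_cubic x hx])
  intro x hx; linarith [this x hx]

lemma sin_le_quintic : ∀ x : ℝ, 0 ≤ x → sin x ≤ x - x^3/6 + x^5/120 := by
  have := nonneg_of_deriv (fun x => (x - x^3/6 + x^5/120) - sin x)
    (fun x => (1 - x^2/2 + x^4/24) - cos x)
    (fun x => by
      have h1 : HasDerivAt (fun x : ℝ => x - x^3/6 + x^5/120) (1 - x^2/2 + x^4/24) x := by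
        have := ((hasDerivAt_id x).sub ((hasDerivAt_pow 3 x).div_const 6)).add
          ((hasDerivAt_pow 5 x).div_const 120)
        exact this.congr_deriv (by norm_num; ring)
      exact h1.sub (Real.hasDerivAt_sin x))
    (by simp)
    (fun x hx => by
      rcases le_or_gt x 0 with h | h
      · have : x = 0 := le_antisymm h hx; simp [this]
      · linarith [cos_le_quartic x hx])
    
  intro x hx; linarith [this x hx]

lemma sincFn_neg (t : ℝ) : sincFn (-t) = sincFn t := by
  unfold sincFn
  rcases eq_or_ne t 0 with h | h
  · simp [h]
  · rw [if_neg (by simpa using h), if_neg h, Real.sin_neg]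
    rw [neg_div_neg_eq]

lemma sin_div_le_one {t : ℝ} (ht : 0 < t) : sin t / t ≤ 1 := by
  rw [div_le_one ht]; exact Real.sin_le ht.le

lemma sincFn_le_one (t : ℝ) : sincFn t ≤ 1 := by
  rcases lt_trichotomy t 0 with h | h | h
  · rw [← sincFn_neg, sincFn, if_neg (by intro hc; linarith [neg_eq_zero.1 hc] : ¬(-t = 0))]
    exact sin_div_le_one (by linarith)
  · simp [sincFn, h]
  · rw [sincFn, if_neg (ne_of_gt h)]
    exact sin_div_le_one h

lemma neg_one_le_sin_div {t : ℝ} (ht : 0 < t) : -1 ≤ sin t / t := by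
  rw [le_div_iff₀ ht]
  rcases le_or_gt 1 t with h1 | h1
  · nlinarith [Real.neg_one_le_sin t]
  · have : 0 ≤ sin t := Real.sin_nonneg_of_nonneg_of_le_pi ht.le
      (by linarith [Real.pi_gt_three])
    nlinarith

lemma neg_one_le_sincFn (t : ℝ) : -1 ≤ sincFn t := by
  rcases lt_trichotomy t 0 with h | h | h
  · rw [← sincFn_neg, sincFn, if_neg (by intro hc; linarith [neg_eq_zero.1 hc] : ¬(-t = 0))]
    exact neg_one_le_sin_div (by linarith)
  · simp [sincFn, h]
  · rw [sincFn, if_neg (ne_of_gt h)]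
    exact neg_one_le_sin_div h

lemma measurable_sincFn : Measurable sincFn := by
  unfold sincFn
  exact Measurable.ite (by simpa using measurableSet_singleton (0:ℝ)) measurable_const
    (Real.measurable_sin.div measurable_id)

lemma one_sub_sincFn_nonneg (t : ℝ) : 0 ≤ 1 - sincFn t := by linarith [sincFn_le_one t]
lemma one_sub_sincFn_le_two (t : ℝ) : 1 - sincFn t ≤ 2 := by linarith [neg_one_le_sincFn t]

lemma sincFn_nonpos_of_pi_le {t : ℝ} (h1 : π ≤ t) (h2 : t ≤ 2*π) : sincFn t ≤ 0 := by
  have hπ := Real.pi_pos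
  have ht : 0 < t := lt_of_lt_of_le hπ h1
  rw [sincFn, if_neg (ne_of_gt ht)]
  apply div_nonpos_of_nonpos_of_nonneg _ ht.le
  have : sin (t - π) = -sin t := Real.sin_sub_pi t
  have h3 : 0 ≤ sin (t - π) :=
    Real.sin_nonneg_of_nonneg_of_le_pi (by linarith) (by linarith)
  linarith [this ▸ h3]

/-- Key pointwise inequality: `(t/π)² ≤ 1 - sinc t` on `[0,π]`. -/
lemma key_pointwise {t : ℝ} (h0 : 0 ≤ t) (h1 : t ≤ π) : (t/π)^2 ≤ 1 - sincFn t := by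
  have hπ := Real.pi_pos
  rcases eq_or_lt_of_le h0 with rfl | ht
  · simp [sincFn]
  · have hs : sin t ≤ t - t^3/π^2 := by
      rcases le_or_gt t 2 with h2 | h2
      · have hq := sin_le_quintic t h0
        have hp2 : (7.5:ℝ) ≤ π^2 := by nlinarith [Real.pi_gt_three]
        have hd : t^3/π^2 ≤ t^3 * (2/15) := by
          rw [div_le_iff₀ (by positivity)]
          nlinarith [pow_nonneg h0 3]
        have h4 : t^5 ≤ 4*t^3 := by
          nlinarith [mul_nonneg (mul_nonneg (pow_nonneg h0 3) (sub_nonneg.2 h2))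
            (by linarith : (0:ℝ) ≤ 2 + t)]
        linarith
      · have hsle : sin t ≤ π - t := by
          have : sin (π - t) = sin t := Real.sin_pi_sub t
          linarith [this ▸ Real.sin_le (by linarith : (0:ℝ) ≤ π - t)]
        have hfac : 0 ≤ (π - t) * (t^2 + π*t - π^2) := by
          apply mul_nonneg (by linarith)
          nlinarith [Real.pi_lt_d2, Real.pi_gt_three]
        have : t^3/π^2 ≤ 2*t - π := by
          rw [div_le_iff₀ (by positivity)]
          nlinarith
        linarith
    rw [sincFn, if_neg (ne_of_gt ht)]
    have : sin t / t ≤ 1 - (t/π)^2 := by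
      rw [div_le_iff₀ ht]
      calc sin t ≤ t - t^3/π^2 := hs
        _ = (1 - (t/π)^2) * t := by field_simp
    linarith

lemma boundedMeasurable_intervalIntegrable {f : ℝ → ℝ} (hf : Measurable f) {C : ℝ}
    (hC : ∀ x, |f x| ≤ C) (a b : ℝ) : IntervalIntegrable f volume a b := by
  rw [intervalIntegrable_iff]
  apply MeasureTheory.Integrable.mono' (g := fun _ => C)
    (MeasureTheory.integrableOn_const measure_Ioc_lt_top.ne)
  · exact hf.aestronglyMeasurable
  · exact ae_of_all _ (fun x => by simpa using hC x)

lemma II1 (v : ℝ) (m : ℕ) (a b : ℝ) :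
    IntervalIntegrable (fun u => (1 - sincFn (v*u))^m * sin u) volume a b := by
  apply boundedMeasurable_intervalIntegrable
    (((measurable_const.sub (measurable_sincFn.comp (measurable_const_mul v))).pow_const m).mul
      Real.measurable_sin) (C := 2^m)
  intro x
  show |(1 - sincFn (v*x))^m * sin x| ≤ 2^m
  rw [abs_mul, abs_pow]
  calc |1 - sincFn (v*x)|^m * |sin x| ≤ 2^m * 1 := by
        apply mul_le_mul _ (Real.abs_sin_le_one x) (abs_nonneg _) (by positivity)
        apply pow_le_pow_left₀ (abs_nonneg _)
        rw [abs_le]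
        constructor <;> [linarith [sincFn_le_one (v*x)]; linarith [neg_one_le_sincFn (v*x)]]
    _ = 2^m := mul_one _

lemma II2 (v : ℝ) (a b : ℝ) :
    IntervalIntegrable (fun u => sincFn (v*u) * sin u) volume a b := by
  apply boundedMeasurable_intervalIntegrable
    ((measurable_sincFn.comp (measurable_const_mul v)).mul Real.measurable_sin) (C := 1)
  intro x
  show |sincFn (v*x) * sin x| ≤ 1
  rw [abs_mul]
  calc |sincFn (v*x)| * |sin x| ≤ 1 * 1 := by
        apply mul_le_mul _ (Real.abs_sin_le_one x) (abs_nonneg _) zero_le_one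
        rw [abs_le]
        exact ⟨neg_one_le_sincFn _, sincFn_le_one _⟩
    _ = 1 := mul_one 1

lemma integral_sin_two : (∫ u in (0:ℝ)..π, sin u) = 2 := by
  rw [integral_sin]; norm_num

lemma integral_sin_mul_sin_freq {w : ℝ} (hw : 2 ≤ w) :
    (∫ u in (0:ℝ)..π, sin u * sin (w*u)) = -sin (w*π) / (w^2 - 1) := by
  have h1 : (1:ℝ) - w ≠ 0 := by intro h; linarith
  have h2 : (1:ℝ) + w ≠ 0 := by intro h; linarith
  have := intervalIntegral.integral_eq_sub_of_hasDerivAt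
    (f := fun u => sin (u - w*u)/(2*(1-w)) - sin (u + w*u)/(2*(1+w)))
    (f' := fun u => sin u * sin (w*u)) (a := 0) (b := π)
    (fun u _ => by
      have d1 : HasDerivAt (fun u : ℝ => sin (u - w*u)) (cos (u - w*u) * (1 - w)) u := by
        have := (((hasDerivAt_id u).sub ((hasDerivAt_id u).const_mul w))).sin
        simpa using this
      have d2 : HasDerivAt (fun u : ℝ => sin (u + w*u)) (cos (u + w*u) * (1 + w)) u := by
        have := (((hasDerivAt_id u).add ((hasDerivAt_id u).const_mul w))).sin
        simpa using this
      have := (d1.div_const (2*(1-w))).sub (d2.div_const (2*(1+w)))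
      convert this using 1
      · rfl
      rw [Real.cos_sub, Real.cos_add]
      field_simp
      ring)
    ((Real.continuous_sin.mul (Real.continuous_sin.comp (continuous_const.mul
      continuous_id))).intervalIntegrable 0 π)
  rw [this]
  have h3 : w^2 - 1 ≠ 0 := by nlinarith
  have h4 : 1 - w^2 ≠ 0 := by intro h; apply h3; linarith
  beta_reduce
  simp only [Real.sin_pi_sub]
  rw [show π + w * π = w*π + π by ring, Real.sin_add_pi]
  simp only [mul_zero, zero_sub, zero_add, Real.sin_zero, neg_zero, zero_div, sub_zero]
  field_simp [h4]
  ring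

lemma integral_sin_mul_cos_freq {w : ℝ} (hw : 2 ≤ w) :
    (∫ u in (0:ℝ)..π, sin u * cos (w*u)) = (1 + cos (w*π)) / (1 - w^2) := by
  have h1 : (1:ℝ) - w ≠ 0 := by intro h; linarith
  have h2 : (1:ℝ) + w ≠ 0 := by intro h; linarith
  have := intervalIntegral.integral_eq_sub_of_hasDerivAt
    (f := fun u => -cos (u + w*u)/(2*(1+w)) - cos (u - w*u)/(2*(1-w)))
    (f' := fun u => sin u * cos (w*u)) (a := 0) (b := π)
    (fun u _ => by
      have d1 : HasDerivAt (fun u : ℝ => cos (u + w*u)) (-sin (u + w*u) * (1 + w)) u := by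
        have := (((hasDerivAt_id u).add ((hasDerivAt_id u).const_mul w))).cos
        simpa using this
      have d2 : HasDerivAt (fun u : ℝ => cos (u - w*u)) (-sin (u - w*u) * (1 - w)) u := by
        have := (((hasDerivAt_id u).sub ((hasDerivAt_id u).const_mul w))).cos
        simpa using this
      have := ((d1.neg).div_const (2*(1+w))).sub (d2.div_const (2*(1-w)))
      convert this using 1
      · rfl
      rw [Real.sin_add, Real.sin_sub]
      field_simp
      ring)
    ((Real.continuous_sin.mul (Real.continuous_cos.comp (continuous_const.mul
      continuous_id))).intervalIntegrable 0 π)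
  rw [this]
  have h3 : w^2 - 1 ≠ 0 := by nlinarith
  have h4 : 1 - w^2 ≠ 0 := by intro h; apply h3; linarith
  beta_reduce
  rw [show π + w * π = w*π + π by ring, Real.cos_add_pi, show π - w * π = π - w*π by ring,
    Real.cos_pi_sub]
  simp only [mul_zero, zero_add, zero_sub, Real.cos_zero, Real.cos_neg]
  field_simp [h4]
  ring

lemma integral_pow_mul_sin_rec (j : ℕ) :
    (∫ u in (0:ℝ)..π, u^(j+2) * sin u)
      = π^(j+2) - (((j:ℝ)+2)*((j:ℝ)+1)) * ∫ u in (0:ℝ)..π, u^j * sin u := by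
  have h1 := intervalIntegral.integral_mul_deriv_eq_deriv_mul
    (u := fun x : ℝ => x^(j+2)) (u' := fun x : ℝ => ((j:ℝ)+2)*x^(j+1))
    (v := fun x => -cos x) (v' := fun x => sin x) (a := 0) (b := π)
    (fun x _ => by simpa using hasDerivAt_pow (j+2) x)
    (fun x _ => by
      have h : HasDerivAt (fun x => -cos x) (-(-sin x)) x := (Real.hasDerivAt_cos x).neg
      simpa using h)
    (by apply Continuous.intervalIntegrable; continuity)
    (Real.continuous_sin.intervalIntegrable 0 π)
  have h2 := intervalIntegral.integral_mul_deriv_eq_deriv_mul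
    (u := fun x : ℝ => x^(j+1)) (u' := fun x : ℝ => ((j:ℝ)+1)*x^j)
    (v := fun x => sin x) (v' := fun x => cos x) (a := 0) (b := π)
    (fun x _ => by simpa using hasDerivAt_pow (j+1) x)
    (fun x _ => Real.hasDerivAt_sin x)
    (by apply Continuous.intervalIntegrable; continuity)
    (Real.continuous_cos.intervalIntegrable 0 π)
  have e1 : (∫ x in (0:ℝ)..π, ((j:ℝ)+2)*x^(j+1)*(-cos x))
      = -((j:ℝ)+2) * ∫ x in (0:ℝ)..π, x^(j+1) * cos x := by
    rw [← intervalIntegral.integral_const_mul]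
    apply intervalIntegral.integral_congr
    intro x _; ring
  have e2 : (∫ x in (0:ℝ)..π, ((j:ℝ)+1)*x^j*(sin x))
      = ((j:ℝ)+1) * ∫ x in (0:ℝ)..π, x^j * sin x := by
    rw [← intervalIntegral.integral_const_mul]
    apply intervalIntegral.integral_congr
    intro x _; ring
  rw [e1] at h1
  rw [e2] at h2
  simp only [Real.cos_pi, Real.sin_pi, Real.cos_zero] at h1 h2
  rw [h1, h2]
  ring_nf

lemma integral_pow_mul_sin_eq (m : ℕ) :
    (∫ u in (0:ℝ)..π, u^(2*m) * sin u)
      = (Nat.factorial (2*m) : ℝ) *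
        ((∑ j ∈ Finset.range (m+1),
          (-1:ℝ)^j * π^(2*(m-j)) / (Nat.factorial (2*(m-j)) : ℝ)) + (-1:ℝ)^m) := by
  induction m with
  | zero =>
    simp only [Nat.mul_zero, pow_zero, one_mul, Nat.factorial]
    rw [integral_sin]
    norm_num
  | succ m ih =>
    have hrec := integral_pow_mul_sin_rec (2*m)
    have hexp : 2*(m+1) = 2*m+2 := by ring
    rw [hexp, hrec, ih]
    have hshift : (∑ j ∈ Finset.range (m+2),
        (-1:ℝ)^j * π^(2*(m+1-j)) / (Nat.factorial (2*(m+1-j)) : ℝ))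
        = -(∑ j ∈ Finset.range (m+1),
            (-1:ℝ)^j * π^(2*(m-j)) / (Nat.factorial (2*(m-j)) : ℝ))
          + π^(2*(m+1)) / (Nat.factorial (2*(m+1)) : ℝ) := by
      rw [Finset.sum_range_succ']
      simp only [Nat.succ_sub_succ]
      rw [show (∑ j ∈ Finset.range (m+1),
          (-1:ℝ)^(j+1) * π^(2*(m-j)) / (Nat.factorial (2*(m-j)) : ℝ))
          = ∑ j ∈ Finset.range (m+1),
            (-1) * ((-1:ℝ)^j * π^(2*(m-j)) / (Nat.factorial (2*(m-j)) : ℝ)) from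
        Finset.sum_congr rfl (fun j _ => by ring)]
      rw [← Finset.mul_sum]
      norm_num
    rw [show m+1+1 = m+2 from rfl, hshift]
    have hfac : (Nat.factorial (2*(m+1)) : ℝ) = (2*(m:ℝ)+2)*(2*(m:ℝ)+1)*(Nat.factorial (2*m)) := by
      rw [show 2*(m+1) = (2*m+1)+1 from by ring, Nat.factorial_succ, Nat.factorial_succ]
      push_cast; ring
    have hne : (Nat.factorial (2*(m+1)) : ℝ) ≠ 0 := Nat.cast_ne_zero.2 (Nat.factorial_ne_zero _)
    rw [hexp] at hfac ⊢
    rw [hfac]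
    have hne' : (Nat.factorial (2*m) : ℝ) ≠ 0 := Nat.cast_ne_zero.2 (Nat.factorial_ne_zero _)
    field_simp
    push_cast
    ring

lemma sin_nonneg_of_mem {u : ℝ} (h : u ∈ Set.Icc (0:ℝ) π) : 0 ≤ sin u :=
  Real.sin_nonneg_of_nonneg_of_le_pi h.1 h.2

lemma lhs_eq (m : ℕ) : (∫ u in (0:ℝ)..π, (u/π)^(2*m) * sin u)
    = (∫ u in (0:ℝ)..π, u^(2*m) * sin u) / π^(2*m) := by
  rw [eq_div_iff (by positivity : (π:ℝ)^(2*m) ≠ 0), ← intervalIntegral.integral_mul_const]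
  apply intervalIntegral.integral_congr
  intro u _
  beta_reduce
  rw [div_pow]
  field_simp

lemma sincFn_le_inv {v u : ℝ} (hv : 0 < v) (hu : 0 < u) : sincFn (v*u) ≤ 1/(v*u) := by
  have hvu : 0 < v*u := mul_pos hv hu
  rw [sincFn, if_neg (ne_of_gt hvu)]
  exact (div_le_div_iff_of_pos_right hvu).2 (Real.sin_le_one _)

lemma q_le_phiTilde (m : ℕ) (hm : 1 ≤ m) {t : ℝ} (ht : 0 ≤ t) :
    sin t * (sin t - 1)/2 ≤ (1 - sincFn t)^m := by
  rcases le_or_gt (sin t) 0 with hs | hs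
  · rcases eq_or_lt_of_le ht with rfl | htpos
    · simp [sincFn, zero_pow (by omega : m ≠ 0)]
    · have h1 : sincFn t ≤ 0 := by
        rw [sincFn, if_neg (ne_of_gt htpos)]
        exact div_nonpos_of_nonpos_of_nonneg hs htpos.le
      calc sin t * (sin t - 1)/2 ≤ 1 := by nlinarith [Real.neg_one_le_sin t]
        _ ≤ (1 - sincFn t)^m := one_le_pow₀ (by linarith)
  · have h2 : sin t * (sin t - 1)/2 ≤ 0 := by nlinarith [Real.sin_le_one t]
    exact le_trans h2 (pow_nonneg (by linarith [sincFn_le_one t]) m)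

set_option maxHeartbeats 2000000 in
/-- KEY: for `v ≥ 1`, `∫ (u/π)^{2m} sin u ≤ ∫ (1-sinc(vu))^m sin u`. -/
lemma key_integral (m : ℕ) (hm : 1 ≤ m) {v : ℝ} (hv : 1 ≤ v) :
    (∫ u in (0:ℝ)..π, (u/π)^(2*m) * sin u)
      ≤ ∫ u in (0:ℝ)..π, (1 - sincFn (v*u))^m * sin u := by
  have hπ := Real.pi_pos
  have hv0 : (0:ℝ) < v := lt_of_lt_of_le one_pos hv
  rcases le_or_gt v 2 with hv2 | hv2
  -- Case 1 ≤ v ≤ 2 : pointwise comparison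
  · apply intervalIntegral.integral_mono_on hπ.le
      (Continuous.intervalIntegrable (by fun_prop) 0 π) (II1 v m 0 π)
    intro u hu
    apply mul_le_mul_of_nonneg_right _ (sin_nonneg_of_mem hu)
    rw [pow_mul]
    apply pow_le_pow_left₀ (sq_nonneg _)
    have hu0 : 0 ≤ u := hu.1
    rcases le_or_gt (v*u) π with hle | hgt
    · have huv : u ≤ v*u := by nlinarith
      calc (u/π)^2 ≤ (v*u/π)^2 :=
            pow_le_pow_left₀ (div_nonneg hu0 hπ.le) ((div_le_div_iff_of_pos_right hπ).2 huv) 2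
        _ ≤ 1 - sincFn (v*u) := key_pointwise (by positivity) hle
    · have hs := sincFn_nonpos_of_pi_le hgt.le (by nlinarith [hu.2])
      have h1 : (u/π)^2 ≤ 1 := pow_le_one₀ (div_nonneg hu0 hπ.le) ((div_le_one hπ).2 hu.2)
      linarith
  · have hπ1 : (1:ℝ) ≤ π := by linarith [Real.pi_gt_three]
    rcases eq_or_lt_of_le hm with hm1 | hm2
    -- Case v > 2, m = 1
    · subst hm1
      -- RHS = 2 - Q
      have hsplit : (∫ u in (0:ℝ)..π, (1 - sincFn (v*u))^1 * sin u)
          = 2 - ∫ u in (0:ℝ)..π, sincFn (v*u) * sin u := by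
        rw [show (∫ u in (0:ℝ)..π, (1 - sincFn (v*u))^1 * sin u)
            = ∫ u in (0:ℝ)..π, (sin u - sincFn (v*u) * sin u) from
          intervalIntegral.integral_congr (fun u _ => by beta_reduce; ring)]
        rw [intervalIntegral.integral_sub (Real.continuous_sin.intervalIntegrable 0 π)
          (II2 v 0 π), integral_sin]
        norm_num
      have hQ1 : (∫ u in (0:ℝ)..1, sincFn (v*u) * sin u) ≤ 1/v := by
        calc (∫ u in (0:ℝ)..1, sincFn (v*u) * sin u) ≤ ∫ u in (0:ℝ)..1, (1/v : ℝ) := by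
              apply intervalIntegral.integral_mono_on zero_le_one (II2 v 0 1)
                intervalIntegrable_const
              intro u hu
              rcases eq_or_lt_of_le hu.1 with rfl | hu0
              · simp [Real.sin_zero]
                positivity
              · have hsin0 : 0 ≤ sin u := Real.sin_nonneg_of_nonneg_of_le_pi hu0.le
                  (le_trans hu.2 hπ1)
                calc sincFn (v*u) * sin u ≤ 1/(v*u) * sin u :=
                      mul_le_mul_of_nonneg_right (sincFn_le_inv hv0 hu0) hsin0
                  _ ≤ 1/(v*u) * u := by
                      apply mul_le_mul_of_nonneg_left (Real.sin_le hu0.le) (by positivity)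
                  _ = 1/v := by field_simp <;> ring
          _ = 1/v := by simp
      have hQ2 : (∫ u in (1:ℝ)..π, sincFn (v*u) * sin u) ≤ (1 + cos 1)/v := by
        calc (∫ u in (1:ℝ)..π, sincFn (v*u) * sin u) ≤ ∫ u in (1:ℝ)..π, (1/v) * sin u := by
              apply intervalIntegral.integral_mono_on hπ1 (II2 v 1 π)
                ((continuous_const.mul Real.continuous_sin).intervalIntegrable 1 π)
              intro u hu
              have hu0 : (0:ℝ) < u := lt_of_lt_of_le one_pos hu.1
              have hsin0 : 0 ≤ sin u := Real.sin_nonneg_of_nonneg_of_le_pi hu0.le hu.2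
              apply mul_le_mul_of_nonneg_right _ hsin0
              calc sincFn (v*u) ≤ 1/(v*u) := sincFn_le_inv hv0 hu0
                _ ≤ 1/v := by
                    apply one_div_le_one_div_of_le hv0
                    nlinarith [hu.1]
          _ = (1 + cos 1)/v := by
              rw [intervalIntegral.integral_const_mul, integral_sin]
              rw [Real.cos_pi]
              ring
      have hQ : (∫ u in (0:ℝ)..π, sincFn (v*u) * sin u) ≤ (2 + cos 1)/v := by
        rw [← intervalIntegral.integral_add_adjacent_intervals (II2 v 0 1) (II2 v 1 π)]
        have := add_le_add hQ1 hQ2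
        calc _ ≤ 1/v + (1+cos 1)/v := this
          _ = (2 + cos 1)/v := by ring
      have hcos1 : (0:ℝ) < 2 + cos 1 := by nlinarith [Real.cos_one_pos]
      have hQ' : (∫ u in (0:ℝ)..π, sincFn (v*u) * sin u) ≤ (2 + cos 1)/2 := by
        calc _ ≤ (2 + cos 1)/v := hQ
          _ ≤ (2 + cos 1)/2 := by
              rw [div_le_div_iff₀ (by linarith) two_pos]
              nlinarith
      -- LHS = (π²-4)/π²
      have hJ2 : (∫ u in (0:ℝ)..π, u^(2*1) * sin u) = π^2 - 4 := by
        rw [integral_pow_mul_sin_eq 1]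
        norm_num [Finset.sum_range_succ, Nat.factorial]
        ring
      rw [lhs_eq 1, hJ2, hsplit]
      have hc23 := Real.cos_one_le
      have hc0 := Real.cos_one_pos
      have hπ12 : π^2 ≤ 12 := by nlinarith [Real.pi_lt_d2]
      rw [div_le_iff₀ (by positivity : (0:ℝ) < π^2)]
      nlinarith
    -- Case v > 2, m ≥ 2
    · have hm2' : 2 ≤ m := hm2
      -- LHS ≤ 1/3
      have hLHS : (∫ u in (0:ℝ)..π, (u/π)^(2*m) * sin u) ≤ 1/3 := by
        have step1 : (∫ u in (0:ℝ)..π, (u/π)^(2*m) * sin u)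
            ≤ ∫ u in (0:ℝ)..π, (u/π)^4 * (π - u) := by
          apply intervalIntegral.integral_mono_on hπ.le
            (Continuous.intervalIntegrable (by fun_prop) 0 π)
            (Continuous.intervalIntegrable (by fun_prop) 0 π)
          intro u hu
          have hu0 : 0 ≤ u := hu.1
          have hbase : u/π ≤ 1 := (div_le_one hπ).2 hu.2
          apply mul_le_mul
          · exact pow_le_pow_of_le_one (div_nonneg hu0 hπ.le) hbase (by omega)
          · calc sin u = sin (π - u) := (Real.sin_pi_sub u).symm
              _ ≤ π - u := Real.sin_le (by linarith [hu.2])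
          · exact sin_nonneg_of_mem hu
          · positivity
        have step2 : (∫ u in (0:ℝ)..π, (u/π)^4 * (π - u)) = π^2/30 := by
          rw [show (fun u : ℝ => (u/π)^4 * (π - u))
              = fun u : ℝ => (π/π^4) * u^4 - (1/π^4) * u^5 from funext fun u => by
            field_simp]
          rw [intervalIntegral.integral_sub
            (Continuous.intervalIntegrable (by fun_prop) 0 π)
            (Continuous.intervalIntegrable (by fun_prop) 0 π),
            intervalIntegral.integral_const_mul, intervalIntegral.integral_const_mul,
            integral_pow, integral_pow]
          field_simp
          ring
        have step3 : (π:ℝ)^2/30 ≤ 1/3 := by nlinarith [Real.pi_lt_d2]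
        linarith
      -- RHS ≥ 1/3
      have hRHS : (1:ℝ)/3 ≤ ∫ u in (0:ℝ)..π, (1 - sincFn (v*u))^m * sin u := by
        have cvu : Continuous fun u : ℝ => sin (v*u) :=
          Real.continuous_sin.comp (continuous_const.mul continuous_id)
        have c2vu : Continuous fun u : ℝ => cos ((2*v)*u) :=
          Real.continuous_cos.comp (continuous_const.mul continuous_id)
        have step1 : (∫ u in (0:ℝ)..π, (sin (v*u) * (sin (v*u) - 1)/2) * sin u)
            ≤ ∫ u in (0:ℝ)..π, (1 - sincFn (v*u))^m * sin u := by
          apply intervalIntegral.integral_mono_on hπ.le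
            ((((cvu.mul (cvu.sub continuous_const)).div_const 2).mul
              Real.continuous_sin).intervalIntegrable 0 π) (II1 v m 0 π)
          intro u hu
          exact mul_le_mul_of_nonneg_right
            (q_le_phiTilde m hm (mul_nonneg hv0.le hu.1)) (sin_nonneg_of_mem hu)
        have I2 := integral_sin_mul_cos_freq (show (2:ℝ) ≤ 2*v by linarith)
        have I3 := integral_sin_mul_sin_freq (show (2:ℝ) ≤ v by linarith)
        have e1 : (∫ u in (0:ℝ)..π, (sin (v*u) * (sin (v*u) - 1)/2) * sin u)
            = (∫ u in (0:ℝ)..π, ((1/4) * sin u - (1/4) * (sin u * cos ((2*v)*u))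
                - (1/2) * (sin u * sin (v*u)))) := by
          apply intervalIntegral.integral_congr
          intro u _
          beta_reduce
          have hsc : sin (v*u)^2 + cos (v*u)^2 = 1 := Real.sin_sq_add_cos_sq (v*u)
          have hc2 : cos ((2*v)*u) = 2 * cos (v*u)^2 - 1 := by
            rw [show (2*v)*u = 2*(v*u) by ring]; exact Real.cos_two_mul (v*u)
          rw [hc2]
          linear_combination (sin u / 2) * hsc
        have e2 : (∫ u in (0:ℝ)..π, ((1/4) * sin u - (1/4) * (sin u * cos ((2*v)*u))
                - (1/2) * (sin u * sin (v*u))))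
            = (1/4) * 2 - (1/4) * ((1 + cos ((2*v)*π))/(1-(2*v)^2))
              - (1/2) * (-sin (v*π)/(v^2-1)) := by
          rw [intervalIntegral.integral_sub
            (Continuous.intervalIntegrable (by fun_prop) 0 π)
            (Continuous.intervalIntegrable (by fun_prop) 0 π),
            intervalIntegral.integral_sub
              (Continuous.intervalIntegrable (by fun_prop) 0 π)
              (Continuous.intervalIntegrable (by fun_prop) 0 π),
            intervalIntegral.integral_const_mul, intervalIntegral.integral_const_mul,
            intervalIntegral.integral_const_mul, integral_sin, I2, I3]
          norm_num
        have hd1 : (1:ℝ) - (2*v)^2 < 0 := by nlinarith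
        have hd2 : (0:ℝ) < v^2 - 1 := by nlinarith
        have hC : (1 + cos ((2*v)*π))/(1-(2*v)^2) ≤ 0 :=
          div_nonpos_of_nonneg_of_nonpos (by linarith [Real.neg_one_le_cos ((2*v)*π)]) hd1.le
        have hS : -sin (v*π)/(v^2-1) ≤ 1/3 := by
          have h1 : -sin (v*π) ≤ 1 := by linarith [Real.neg_one_le_sin (v*π)]
          have h2 : -sin (v*π)/(v^2-1) ≤ 1/(v^2-1) := (div_le_div_iff_of_pos_right hd2).2 h1
          have h3 : (1:ℝ)/(v^2-1) ≤ 1/3 := one_div_le_one_div_of_le (by norm_num) (by nlinarith)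
          linarith
        have step3 : (1:ℝ)/3 ≤ (∫ u in (0:ℝ)..π, (sin (v*u) * (sin (v*u) - 1)/2) * sin u) := by
          rw [e1, e2]
          nlinarith
        linarith [step1, step3]
      linarith

lemma phiTilde_nonneg (m : ℕ) (t : ℝ) : 0 ≤ phiTilde m t :=
  pow_nonneg (by linarith [sincFn_le_one t]) m

lemma phiTilde_le (m : ℕ) (t : ℝ) : phiTilde m t ≤ 2^m :=
  pow_le_pow_left₀ (by linarith [sincFn_le_one t]) (by linarith [neg_one_le_sincFn t]) m

lemma measurable_phiTilde (m : ℕ) (c d : ℝ) :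
    Measurable (fun u : ℝ => phiTilde m (c * (u / d))) := by
  unfold phiTilde
  exact (measurable_const.sub
    (measurable_sincFn.comp ((measurable_id.div_const d).const_mul c))).pow_const m


set_option maxHeartbeats 2000000 in
/-- **Corollary 4.** For every positive integer `m` and every `n ∈ ℕ`:
`E_n(A) ≤ (π^{2m}/((2m)! K(m))) · ∫_0^π ω̃_m(A, u/λ_n) sin u du`, where
`K(m) = Σ_{j=0}^m (-1)^j π^{2m-2j}/(2m-2j)! + (-1)^m`. -/
theorem jackson_steklov_modulus
    (Λ : ℤ → ℝ) (M : ℤ → ℝ → ℝ) (A : ℤ → ℂ)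
    (hΛ : IsExponents Λ) (hM : ∀ k, IsOrlicz (M k)) (hA : orliczNorm M A ≠ ⊤)
    (m : ℕ) (hm : 1 ≤ m) (n : ℕ) (hn : 1 ≤ n) :
    (bestE M A n).toReal
      ≤ π ^ (2 * m) /
          ((Nat.factorial (2 * m) : ℝ) *
            ((∑ j ∈ Finset.range (m + 1),
                (-1 : ℝ) ^ j * π ^ (2 * (m - j)) / (Nat.factorial (2 * (m - j)) : ℝ))
              + (-1 : ℝ) ^ m)) *
        ∫ u in (0 : ℝ)..π, (genMod Λ M A (phiTilde m) (u / Λ n)).toReal * Real.sin u := by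
  obtain ⟨hΛ0, hΛneg, hΛpos, hΛmono⟩ := hΛ
  have hπ := Real.pi_pos
  have hn' : (1:ℤ) ≤ (n:ℤ) := by exact_mod_cast hn
  have hLpos : 0 < Λ (n:ℤ) := hΛpos n hn'
  set L := Λ (n : ℤ) with hLdef
  -- monotonicity of Λ
  have hmono : ∀ a b : ℤ, 1 ≤ a → a ≤ b → Λ a ≤ Λ b := by
    intro a b ha hab
    refine Int.le_induction (motive := fun b _ => Λ a ≤ Λ b) ?_ ?_ b hab
    · exact le_refl _
    · intro b' hb' ih
      exact le_trans ih (le_of_lt (hΛmono b' (le_trans ha hb')))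
  -- |Λ k| ≥ L for |k| ≥ n
  have habs : ∀ k : ℤ, (n:ℤ) ≤ |k| → L ≤ |Λ k| := by
    intro k hk
    rcases le_or_gt 0 k with h0 | h0
    · rw [abs_of_nonneg h0] at hk
      have h := hmono n k hn' hk
      rw [abs_of_pos (lt_of_lt_of_le hLpos h)]
      exact h
    · rw [abs_of_neg h0] at hk
      have h1 : Λ k = -Λ (-k) := by
        have h2 := hΛneg (-k); rw [neg_neg] at h2; linarith
      have h2 : L ≤ Λ (-k) := hmono n (-k) hn' hk
      rw [h1, abs_neg, abs_of_pos (lt_of_lt_of_le hLpos h2)]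
      exact h2
  -- bound for genMod
  have hgenBound : ∀ δ : ℝ, genMod Λ M A (phiTilde m) δ
      ≤ ENNReal.ofReal (2^m) * orliczNorm M A := by
    intro δ
    refine iSup₂_le fun h _ => iSup₂_le fun γ hγ => ?_
    calc ∑' k : ℤ, ENNReal.ofReal (γ k * phiTilde m (Λ k * h) * ‖A k‖)
        ≤ ∑' k : ℤ, ENNReal.ofReal (2^m) * ENNReal.ofReal (γ k * ‖A k‖) := by
          apply ENNReal.tsum_le_tsum
          intro k
          rw [← ENNReal.ofReal_mul (by positivity)]
          apply ENNReal.ofReal_le_ofReal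
          have h1 := phiTilde_le m (Λ k * h)
          have h2 := phiTilde_nonneg m (Λ k * h)
          have h3 := (hγ.1 k).le
          have h4 := norm_nonneg (A k)
          calc γ k * phiTilde m (Λ k * h) * ‖A k‖
              ≤ γ k * 2^m * ‖A k‖ :=
                mul_le_mul_of_nonneg_right (mul_le_mul_of_nonneg_left h1 h3) h4
            _ = 2^m * (γ k * ‖A k‖) := by ring
      _ = ENNReal.ofReal (2^m) * ∑' k : ℤ, ENNReal.ofReal (γ k * ‖A k‖) :=
          ENNReal.tsum_mul_left
      _ ≤ ENNReal.ofReal (2^m) * orliczNorm M A := by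
          apply mul_le_mul_right
          exact le_iSup₂ (f := fun γ (_ : γ ∈ GammaSet M) =>
            ∑' k : ℤ, ENNReal.ofReal (γ k * ‖A k‖)) γ hγ
  have hgenTop : ∀ δ : ℝ, genMod Λ M A (phiTilde m) δ ≠ ⊤ := fun δ =>
    ne_top_of_le_ne_top (ENNReal.mul_ne_top ENNReal.ofReal_ne_top hA) (hgenBound δ)
  have hgenMono : Monotone (fun δ => genMod Λ M A (phiTilde m) δ) := by
    intro δ1 δ2 hδ
    exact iSup₂_le fun h hh => le_iSup₂ (f := fun (h : ℝ) (_ : |h| ≤ δ2) =>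
      ⨆ γ ∈ GammaSet M, ∑' k : ℤ,
        ENNReal.ofReal (γ k * phiTilde m (Λ k * h) * ‖A k‖)) h (le_trans hh hδ)
  have hFmono : Monotone (fun u => (genMod Λ M A (phiTilde m) (u / L)).toReal) := by
    intro a b hab
    exact ENNReal.toReal_mono (hgenTop _) (hgenMono ((div_le_div_iff_of_pos_right hLpos).2 hab))
  have hI : IntervalIntegrable
      (fun u => (genMod Λ M A (phiTilde m) (u / L)).toReal * sin u) volume 0 π :=
    (hFmono.intervalIntegrable).mul_continuousOn Real.continuous_sin.continuousOn
  have hInn : 0 ≤ ∫ u in (0:ℝ)..π, (genMod Λ M A (phiTilde m) (u / L)).toReal * sin u :=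
    intervalIntegral.integral_nonneg hπ.le fun u hu =>
      mul_nonneg ENNReal.toReal_nonneg (Real.sin_nonneg_of_nonneg_of_le_pi hu.1 hu.2)
  set I := ∫ u in (0:ℝ)..π, (genMod Λ M A (phiTilde m) (u / L)).toReal * sin u with hIdef
  set D := ∫ u in (0:ℝ)..π, u^(2*m) * sin u with hDdef
  have hDpos : 0 < D := by
    rw [hDdef]
    apply intervalIntegral.intervalIntegral_pos_of_pos_on
      (Continuous.intervalIntegrable (by fun_prop) 0 π)
    · intro x hx
      have hs := Real.sin_pos_of_pos_of_lt_pi hx.1 hx.2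
      have hx0 := hx.1
      positivity
    · exact hπ
  set c' := ∫ u in (0:ℝ)..π, (u/π)^(2*m) * sin u with hc'def
  have hc'eq : c' = D / π^(2*m) := lhs_eq m
  have hc'pos : 0 < c' := by rw [hc'eq]; positivity
  -- main estimate
  have hmain : bestE M A n ≤ ENNReal.ofReal (I / c') := by
    unfold bestE
    refine iSup₂_le fun γ hγ => ?_
    have hgmeas : ∀ k : ℤ, Measurable (fun u : ℝ =>
        ENNReal.ofReal (γ k * phiTilde m (Λ k * (u / L)) * ‖A k‖ * sin u)) := by
      intro k
      exact ((((measurable_phiTilde m (Λ k) L).const_mul (γ k)).mul_const _).mul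
        Real.measurable_sin).ennreal_ofReal
    have hIIk : ∀ k : ℤ, IntervalIntegrable
        (fun u => γ k * phiTilde m (Λ k * (u / L)) * ‖A k‖ * sin u) volume 0 π := by
      intro k
      apply boundedMeasurable_intervalIntegrable
        ((((measurable_phiTilde m (Λ k) L).const_mul (γ k)).mul_const _).mul
          Real.measurable_sin)
        (C := γ k * 2^m * ‖A k‖)
      intro x
      show |γ k * phiTilde m (Λ k * (x / L)) * ‖A k‖ * sin x| ≤ γ k * 2 ^ m * ‖A k‖
      rw [abs_mul]
      have h1 := phiTilde_nonneg m (Λ k * (x / L))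
      have h2 := phiTilde_le m (Λ k * (x / L))
      have h3 := (hγ.1 k).le
      have h4 := norm_nonneg (A k)
      have h5 : |γ k * phiTilde m (Λ k * (x / L)) * ‖A k‖|
          = γ k * phiTilde m (Λ k * (x / L)) * ‖A k‖ :=
        abs_of_nonneg (by positivity)
      rw [h5]
      have h6 := Real.abs_sin_le_one x
      calc γ k * phiTilde m (Λ k * (x / L)) * ‖A k‖ * |sin x|
          ≤ γ k * phiTilde m (Λ k * (x / L)) * ‖A k‖ * 1 :=
            mul_le_mul_of_nonneg_left h6 (by positivity)
        _ = γ k * phiTilde m (Λ k * (x / L)) * ‖A k‖ := mul_one _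
        _ ≤ γ k * 2^m * ‖A k‖ :=
            mul_le_mul_of_nonneg_right (mul_le_mul_of_nonneg_left h2 h3) h4
    have hle1 : ∀ k : ℤ,
        (if (n:ℤ) ≤ |k| then ENNReal.ofReal (γ k * ‖A k‖) else 0)
            * ENNReal.ofReal c'
          ≤ ∫⁻ u in Set.Ioc (0:ℝ) π,
              ENNReal.ofReal (γ k * phiTilde m (Λ k * (u / L)) * ‖A k‖ * sin u) := by
      intro k
      split_ifs with hk
      · have hwk : 1 ≤ |Λ k| / L := (one_le_div hLpos).2 (habs k hk)
        have hkeyk : c' ≤ ∫ u in (0:ℝ)..π, phiTilde m (Λ k * (u / L)) * sin u := by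
          refine (key_integral m hm hwk).trans_eq ?_
          apply intervalIntegral.integral_congr
          intro u _
          beta_reduce
          unfold phiTilde
          congr 2
          rcases abs_cases (Λ k) with ⟨he, _⟩ | ⟨he, _⟩
          · rw [he]; ring
          · rw [he, show -Λ k / L * u = -(Λ k * (u / L)) by ring, sincFn_neg]
        have hreal : γ k * ‖A k‖ * c'
            ≤ ∫ u in (0:ℝ)..π,
                γ k * phiTilde m (Λ k * (u / L)) * ‖A k‖ * sin u := by
          have e : (fun u => γ k * phiTilde m (Λ k * (u / L)) * ‖A k‖ * sin u)
              = fun u => (γ k * ‖A k‖) * (phiTilde m (Λ k * (u / L)) * sin u) :=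
            funext fun u => by ring
          rw [e, intervalIntegral.integral_const_mul]
          exact mul_le_mul_of_nonneg_left hkeyk (mul_nonneg (hγ.1 k).le (norm_nonneg _))
        calc ENNReal.ofReal (γ k * ‖A k‖) * ENNReal.ofReal c'
            = ENNReal.ofReal (γ k * ‖A k‖ * c') :=
              (ENNReal.ofReal_mul (mul_nonneg (hγ.1 k).le (norm_nonneg _))).symm
          _ ≤ ENNReal.ofReal (∫ u in (0:ℝ)..π,
                γ k * phiTilde m (Λ k * (u / L)) * ‖A k‖ * sin u) :=
              ENNReal.ofReal_le_ofReal hreal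
          _ = ∫⁻ u in Set.Ioc (0:ℝ) π,
                ENNReal.ofReal (γ k * phiTilde m (Λ k * (u / L)) * ‖A k‖ * sin u) := by
              rw [intervalIntegral.integral_of_le hπ.le]
              apply MeasureTheory.ofReal_integral_eq_lintegral_ofReal
              · exact (intervalIntegrable_iff_integrableOn_Ioc_of_le hπ.le).1 (hIIk k)
              · refine (ae_restrict_iff' measurableSet_Ioc).2 (ae_of_all _ fun u hu => ?_)
                have hsin : 0 ≤ sin u := Real.sin_nonneg_of_nonneg_of_le_pi hu.1.le hu.2
                exact mul_nonneg (mul_nonneg (mul_nonneg (hγ.1 k).le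
                  (phiTilde_nonneg _ _)) (norm_nonneg _)) hsin
      · simp
    have hsum : (∑' k : ℤ, if (n:ℤ) ≤ |k|
          then ENNReal.ofReal (γ k * ‖A k‖) else 0) * ENNReal.ofReal c'
        ≤ ENNReal.ofReal I := by
      calc (∑' k : ℤ, if (n:ℤ) ≤ |k|
            then ENNReal.ofReal (γ k * ‖A k‖) else 0) * ENNReal.ofReal c'
          = ∑' k : ℤ, (if (n:ℤ) ≤ |k|
              then ENNReal.ofReal (γ k * ‖A k‖) else 0) * ENNReal.ofReal c' :=
            ENNReal.tsum_mul_right.symm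
        _ ≤ ∑' k : ℤ, ∫⁻ u in Set.Ioc (0:ℝ) π,
              ENNReal.ofReal (γ k * phiTilde m (Λ k * (u / L)) * ‖A k‖ * sin u) :=
            ENNReal.tsum_le_tsum hle1
        _ = ∫⁻ u in Set.Ioc (0:ℝ) π, ∑' k : ℤ,
              ENNReal.ofReal (γ k * phiTilde m (Λ k * (u / L)) * ‖A k‖ * sin u) :=
            (MeasureTheory.lintegral_tsum fun k => (hgmeas k).aemeasurable).symm
        _ ≤ ∫⁻ u in Set.Ioc (0:ℝ) π,
              ENNReal.ofReal ((genMod Λ M A (phiTilde m) (u / L)).toReal * sin u) := by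
            apply MeasureTheory.lintegral_mono_ae
            refine (ae_restrict_iff' measurableSet_Ioc).2 (ae_of_all _ fun u hu => ?_)
            have hsin : 0 ≤ sin u := Real.sin_nonneg_of_nonneg_of_le_pi hu.1.le hu.2
            have e1 : ∀ k : ℤ,
                ENNReal.ofReal (γ k * phiTilde m (Λ k * (u / L)) * ‖A k‖ * sin u)
                = ENNReal.ofReal (γ k * phiTilde m (Λ k * (u / L)) * ‖A k‖)
                    * ENNReal.ofReal (sin u) := fun k =>
              ENNReal.ofReal_mul (mul_nonneg (mul_nonneg (hγ.1 k).le
                (phiTilde_nonneg _ _)) (norm_nonneg _))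
            calc ∑' k : ℤ,
                ENNReal.ofReal (γ k * phiTilde m (Λ k * (u / L)) * ‖A k‖ * sin u)
                = (∑' k : ℤ, ENNReal.ofReal
                    (γ k * phiTilde m (Λ k * (u / L)) * ‖A k‖))
                    * ENNReal.ofReal (sin u) := by
                  simp_rw [e1]
                  exact ENNReal.tsum_mul_right
              _ ≤ genMod Λ M A (phiTilde m) (u / L) * ENNReal.ofReal (sin u) := by
                  apply mul_le_mul_left
                  have hh : |u / L| ≤ u / L := by
                    rw [abs_of_nonneg (div_nonneg hu.1.le hLpos.le)]
                  have s1 := le_iSup₂ (f := fun γ (_ : γ ∈ GammaSet M) => ∑' k : ℤ,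
                    ENNReal.ofReal (γ k * phiTilde m (Λ k * (u / L)) * ‖A k‖)) γ hγ
                  have s2 := le_iSup₂ (f := fun (h : ℝ) (_ : |h| ≤ u / L) =>
                    ⨆ γ ∈ GammaSet M, ∑' k : ℤ,
                      ENNReal.ofReal (γ k * phiTilde m (Λ k * h) * ‖A k‖))
                    (u / L) hh
                  exact le_trans s1 s2
              _ = ENNReal.ofReal ((genMod Λ M A (phiTilde m) (u / L)).toReal * sin u) := by
                  rw [ENNReal.ofReal_mul ENNReal.toReal_nonneg,
                    ENNReal.ofReal_toReal (hgenTop _)]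
        _ = ENNReal.ofReal I := by
            rw [hIdef, intervalIntegral.integral_of_le hπ.le]
            refine (MeasureTheory.ofReal_integral_eq_lintegral_ofReal ?_ ?_).symm
            · exact (intervalIntegrable_iff_integrableOn_Ioc_of_le hπ.le).1 hI
            · refine (ae_restrict_iff' measurableSet_Ioc).2 (ae_of_all _ fun u hu => ?_)
              exact mul_nonneg ENNReal.toReal_nonneg
                (Real.sin_nonneg_of_nonneg_of_le_pi hu.1.le hu.2)
    have hdiv := (ENNReal.le_div_iff_mul_le
      (Or.inl (ENNReal.ofReal_pos.2 hc'pos).ne') (Or.inl ENNReal.ofReal_ne_top)).2 hsum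
    exact hdiv.trans_eq (ENNReal.ofReal_div_of_pos hc'pos).symm
  -- conclude
  have hfinal : (bestE M A n).toReal ≤ I / c' :=
    ENNReal.toReal_le_of_le_ofReal (div_nonneg hInn hc'pos.le) hmain
  rw [← integral_pow_mul_sin_eq m, ← hDdef]
  calc (bestE M A n).toReal ≤ I / c' := hfinal
    _ = π^(2*m) / D * I := by
        rw [hc'eq, div_div_eq_mul_div]
        field_simp

end
end

section
/- (Inverse approximation theorem.) Let τ > 0 and let φ ∈ Φ be nondecreasing on [0,τ] with φ(τ) = sup{φ(t) : t ∈ ℝ}. Assume moreover that E_N(A) → 0 as N → ∞. Then for every n ∈ ℕ: ω_φ(A, τ/λ_n) ≤ Σ_{ν=1}^{n} ( φ(τλ_ν/λ_n) − φ(τλ_{ν−1}/λ_n) ) · E_ν(A), where λ_0 = 0. -/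
open MeasureTheory Real Filter Finset intervalIntegral
open scoped ENNReal Topology

noncomputable section

/-- **Inverse approximation theorem.** If `φ ∈ Φ` is nondecreasing on `[0,τ]` with
`φ(τ) = max φ`, and `E_N(A) → 0`, then for every `n ∈ ℕ`:
`ω_φ(A, τ/λ_n) ≤ Σ_{ν=1}^n (φ(τλ_ν/λ_n) - φ(τλ_{ν-1}/λ_n)) E_ν(A)`. -/
theorem inverse_theorem
    (Λ : ℤ → ℝ) (M : ℤ → ℝ → ℝ) (A : ℤ → ℂ)
    (hΛ : IsExponents Λ) (hM : ∀ k, IsOrlicz (M k)) (hA : orliczNorm M A ≠ ⊤)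
    (τ : ℝ) (hτ : 0 < τ) (φ : ℝ → ℝ) (hφ : IsPhi φ)
    (hmono : MonotoneOn φ (Set.Icc 0 τ)) (hmax : ∀ t : ℝ, φ t ≤ φ τ)
    (hE : Filter.Tendsto (fun N : ℕ => bestE M A N) Filter.atTop (nhds 0))
    (n : ℕ) (hn : 1 ≤ n) :
    genMod Λ M A φ (τ / Λ n)
      ≤ ∑ ν ∈ Finset.Icc 1 n,
          ENNReal.ofReal (φ (τ * Λ ν / Λ n) - φ (τ * Λ ((ν : ℤ) - 1) / Λ n)) *
            bestE M A ν := by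
  obtain ⟨hΛ0, hΛneg, hΛpos, hΛstrict⟩ := hΛ
  obtain ⟨hφc, hφbdd, hφnn, hφ0, hφeven, hφzero⟩ := hφ
  have hn1 : (1:ℤ) ≤ (n:ℤ) := by exact_mod_cast hn
  have hΛn : 0 < Λ n := hΛpos n hn1
  -- monotonicity facts about Λ
  have lmono1 : ∀ j : ℤ, 1 ≤ j → ∀ j', j ≤ j' → Λ j ≤ Λ j' := by
    intro j hj j' hj'
    exact Int.le_induction (motive := fun j' _ => Λ j ≤ Λ j') le_rfl
      (fun m hm ih => ih.trans (hΛstrict m (hj.trans hm)).le) j' hj'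
  have lnonneg : ∀ j : ℤ, 0 ≤ j → 0 ≤ Λ j := by
    intro j hj
    rcases eq_or_lt_of_le hj with h0 | h0
    · rw [← h0, hΛ0]
    · exact (hΛpos j h0).le
  have lmono : ∀ j j' : ℤ, 0 ≤ j → j ≤ j' → Λ j ≤ Λ j' := by
    intro j j' hj hjj
    rcases eq_or_lt_of_le hj with h0 | h0
    · rw [← h0, hΛ0]; exact lnonneg j' (hj.trans hjj)
    · exact lmono1 j h0 j' hjj
  have absΛ : ∀ k : ℤ, |Λ k| = Λ |k| := by
    intro k
    rcases lt_trichotomy k 0 with hk | hk | hk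
    · have h1 : Λ k = -Λ (-k) := by
        have := hΛneg (-k); rw [neg_neg] at this; linarith
      have h2 : 0 < Λ (-k) := hΛpos (-k) (by omega)
      rw [abs_of_neg hk, h1, abs_neg, abs_of_pos h2]
    · subst hk; simp [hΛ0]
    · rw [abs_of_pos hk, abs_of_pos (hΛpos k (by omega))]
  have φabs : ∀ t : ℝ, φ |t| = φ t := by
    intro t
    rcases le_or_gt 0 t with ht | ht
    · rw [abs_of_nonneg ht]
    · rw [abs_of_neg ht, hφeven]
  set b : ℤ → ℝ := fun j => φ (τ * Λ j / Λ n) with hbdef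
  have hb0 : b 0 = 0 := by simp [hbdef, hΛ0, hφ0]
  have hbn : b n = φ τ := by
    simp only [hbdef]
    rw [mul_div_assoc, div_self hΛn.ne', mul_one]
  have hbIcc : ∀ j : ℤ, 0 ≤ j → j ≤ n → τ * Λ j / Λ n ∈ Set.Icc (0:ℝ) τ := by
    intro j hj hjn
    constructor
    · exact div_nonneg (mul_nonneg hτ.le (lnonneg j hj)) hΛn.le
    · rw [div_le_iff₀ hΛn]
      calc τ * Λ j ≤ τ * Λ n := mul_le_mul_of_nonneg_left (lmono j n hj hjn) hτ.le
        _ = τ * Λ n := rfl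
  have hbmono : ∀ j j' : ℤ, 0 ≤ j → j ≤ j' → j' ≤ n → b j ≤ b j' := by
    intro j j' hj hjj hjn
    refine hmono (hbIcc j hj (hjj.trans hjn)) (hbIcc j' (hj.trans hjj) hjn) ?_
    exact (div_le_div_iff_of_pos_right hΛn).mpr
      (mul_le_mul_of_nonneg_left (lmono j j' hj hjj) hτ.le)
  have goal_eq : (∑ ν ∈ Finset.Icc 1 n,
      ENNReal.ofReal (φ (τ * Λ ν / Λ n) - φ (τ * Λ ((ν : ℤ) - 1) / Λ n)) * bestE M A ν)
      = ∑ ν ∈ Finset.Icc 1 n,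
        ENNReal.ofReal (b ν - b ((ν : ℤ) - 1)) * bestE M A ν := rfl
  rw [genMod, goal_eq]
  refine iSup₂_le fun h hh => iSup₂_le fun γ hγ => ?_
  -- the key pointwise estimate
  have key : ∀ k : ℤ, ENNReal.ofReal (γ k * φ (Λ k * h) * ‖A k‖) ≤
      ∑ ν ∈ Finset.Icc 1 n, ENNReal.ofReal (b ν - b ((ν : ℤ) - 1)) *
        (if ((ν : ℕ) : ℤ) ≤ |k| then ENNReal.ofReal (γ k * ‖A k‖) else 0) := by
    intro k
    set m : ℕ := min n k.natAbs with hm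
    have hmn : m ≤ n := min_le_left _ _
    -- step 1 : φ (Λ k * h) ≤ b m
    have step1 : φ (Λ k * h) ≤ b (m : ℤ) := by
      have e1 : φ (Λ k * h) = φ (Λ |k| * |h|) := by
        rw [← φabs (Λ k * h), abs_mul, absΛ]
      rw [e1]
      by_cases hc : k.natAbs ≤ n
      · have hmk' : (m : ℤ) = |k| := by
          rw [Int.abs_eq_natAbs, hm]; exact_mod_cast min_eq_right hc
        have habsk : (0:ℤ) ≤ |k| := abs_nonneg k
        have habskn : |k| ≤ (n : ℤ) := by rw [Int.abs_eq_natAbs]; exact_mod_cast hc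
        have hle : Λ |k| * |h| ≤ τ * Λ |k| / Λ n := by
          calc Λ |k| * |h| ≤ Λ |k| * (τ / Λ n) :=
                mul_le_mul_of_nonneg_left hh (lnonneg _ habsk)
            _ = τ * Λ |k| / Λ n := by ring
        have hmem : Λ |k| * |h| ∈ Set.Icc (0:ℝ) τ := by
          constructor
          · exact mul_nonneg (lnonneg _ habsk) (abs_nonneg h)
          · exact hle.trans (hbIcc |k| habsk habskn).2
        rw [hbdef, hmk']
        exact hmono hmem (hbIcc |k| habsk habskn) hle
      · have hmn' : m = n := by omega
        rw [hmn']
        push_cast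
        rw [hbn]
        exact hmax _
    have hcnn : 0 ≤ γ k * ‖A k‖ :=
      mul_nonneg (hγ.1 k).le (norm_nonneg _)
    have step2 : ENNReal.ofReal (γ k * φ (Λ k * h) * ‖A k‖)
        ≤ ENNReal.ofReal (b (m : ℤ)) * ENNReal.ofReal (γ k * ‖A k‖) := by
      rw [← ENNReal.ofReal_mul (hφnn _)]
      apply ENNReal.ofReal_le_ofReal
      calc γ k * φ (Λ k * h) * ‖A k‖
          = φ (Λ k * h) * (γ k * ‖A k‖) := by ring
        _ ≤ b (m : ℤ) * (γ k * ‖A k‖) :=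
            mul_le_mul_of_nonneg_right step1 hcnn
    -- telescoping identity
    have htel : ∀ p : ℕ, p ≤ n →
        ∑ ν ∈ Finset.Icc 1 p, (b (ν : ℤ) - b ((ν : ℤ) - 1)) = b (p : ℤ) := by
      intro p hp
      induction p with
      | zero => simpa using hb0.symm
      | succ q ih =>
        rw [Finset.sum_Icc_succ_top (by omega : 1 ≤ q + 1), ih (by omega)]
        have hcast : ((q + 1 : ℕ) : ℤ) - 1 = (q : ℤ) := by push_cast; ring
        rw [hcast]
        ring
    have hΔnn : ∀ ν ∈ Finset.Icc 1 n, 0 ≤ b (ν : ℤ) - b ((ν : ℤ) - 1) := by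
      intro ν hν
      rw [Finset.mem_Icc] at hν
      have h1 : (0:ℤ) ≤ (ν : ℤ) - 1 := by omega
      have h2 : ((ν : ℤ) - 1) ≤ (ν : ℤ) := by omega
      have h3 : (ν : ℤ) ≤ (n : ℤ) := by exact_mod_cast hν.2
      linarith [hbmono ((ν : ℤ) - 1) (ν : ℤ) h1 h2 h3]
    have hfilter : (Finset.Icc 1 n).filter (fun ν : ℕ => ((ν : ℤ) ≤ |k|)) =
        Finset.Icc 1 m := by
      ext ν
      simp only [Finset.mem_filter, Finset.mem_Icc, hm, Int.abs_eq_natAbs, Int.ofNat_le]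
      omega
    calc ENNReal.ofReal (γ k * φ (Λ k * h) * ‖A k‖)
        ≤ ENNReal.ofReal (b (m : ℤ)) * ENNReal.ofReal (γ k * ‖A k‖) := step2
      _ = (∑ ν ∈ Finset.Icc 1 m, ENNReal.ofReal (b (ν : ℤ) - b ((ν : ℤ) - 1))) *
            ENNReal.ofReal (γ k * ‖A k‖) := by
          rw [← ENNReal.ofReal_sum_of_nonneg
              (fun ν hν => hΔnn ν (Finset.mem_Icc.mpr
                ⟨(Finset.mem_Icc.mp hν).1, le_trans (Finset.mem_Icc.mp hν).2 hmn⟩)),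
            htel m hmn]
      _ = ∑ ν ∈ Finset.Icc 1 m, ENNReal.ofReal (b (ν : ℤ) - b ((ν : ℤ) - 1)) *
            ENNReal.ofReal (γ k * ‖A k‖) := Finset.sum_mul _ _ _
      _ = ∑ ν ∈ (Finset.Icc 1 n).filter (fun ν : ℕ => ((ν : ℤ) ≤ |k|)),
            ENNReal.ofReal (b (ν : ℤ) - b ((ν : ℤ) - 1)) *
            ENNReal.ofReal (γ k * ‖A k‖) := by rw [hfilter]
      _ = ∑ ν ∈ Finset.Icc 1 n, if ((ν : ℤ) ≤ |k|) then
            ENNReal.ofReal (b (ν : ℤ) - b ((ν : ℤ) - 1)) *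
            ENNReal.ofReal (γ k * ‖A k‖) else 0 :=
          (Finset.sum_filter _ _)
      _ = ∑ ν ∈ Finset.Icc 1 n, ENNReal.ofReal (b (ν : ℤ) - b ((ν : ℤ) - 1)) *
            (if ((ν : ℕ) : ℤ) ≤ |k| then ENNReal.ofReal (γ k * ‖A k‖) else 0) := by
          refine Finset.sum_congr rfl fun ν _ => ?_
          rw [mul_ite, mul_zero]
  calc (∑' k : ℤ, ENNReal.ofReal (γ k * φ (Λ k * h) * ‖A k‖))
      ≤ ∑' k : ℤ, ∑ ν ∈ Finset.Icc 1 n, ENNReal.ofReal (b ν - b ((ν : ℤ) - 1)) *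
          (if ((ν : ℕ) : ℤ) ≤ |k| then ENNReal.ofReal (γ k * ‖A k‖) else 0) :=
        ENNReal.tsum_le_tsum key
    _ = ∑ ν ∈ Finset.Icc 1 n, ∑' k : ℤ, ENNReal.ofReal (b ν - b ((ν : ℤ) - 1)) *
          (if ((ν : ℕ) : ℤ) ≤ |k| then ENNReal.ofReal (γ k * ‖A k‖) else 0) :=
        Summable.tsum_finsetSum (fun ν _ => ENNReal.summable)
    _ ≤ ∑ ν ∈ Finset.Icc 1 n, ENNReal.ofReal (b ν - b ((ν : ℤ) - 1)) * bestE M A ν := by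
        refine Finset.sum_le_sum fun ν _ => ?_
        rw [ENNReal.tsum_mul_left]
        refine mul_le_mul_right ?_ _
        rw [bestE]
        exact le_iSup₂ (f := fun γ' (_ : γ' ∈ GammaSet M) => ∑' k : ℤ,
          if ((ν : ℕ) : ℤ) ≤ |k| then ENNReal.ofReal (γ' k * ‖A k‖) else 0) γ hγ

end
end

section
/- (Improved inverse theorem.) Assume E_N(A) → 0 as N → ∞. Then for every n ∈ ℕ and every α > 0: ω_α(A, π/λ_n) ≤ (π/λ_n)^α · Σ_{ν=1}^{n} (λ_ν^α − λ_{ν−1}^α) · E_ν(A), where λ_0 = 0. -/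
open MeasureTheory Real Filter Finset intervalIntegral
open scoped ENNReal Topology

noncomputable section

section AuxLemmas

variable {Λ : ℤ → ℝ}

lemma aux_L_nonneg (hΛ : IsExponents Λ) (k : ℕ) : 0 ≤ Λ k := by
  rcases Nat.eq_zero_or_pos k with h | h
  · simp [h, hΛ.1]
  · exact (hΛ.2.2.1 k (by exact_mod_cast h)).le

lemma aux_L_mono (hΛ : IsExponents Λ) : Monotone (fun k : ℕ => Λ k) := by
  apply monotone_nat_of_le_succ
  intro k
  rcases Nat.eq_zero_or_pos k with h | h
  · subst h
    simpa [hΛ.1] using (hΛ.2.2.1 1 le_rfl).le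
  · have h2 := (hΛ.2.2.2 k (by exact_mod_cast h)).le
    simpa [Nat.cast_add] using h2

lemma aux_L_abs (hΛ : IsExponents Λ) (k : ℤ) : |Λ k| = Λ (k.natAbs : ℤ) := by
  rcases le_or_gt 0 k with h | h
  · have hk : ((k.natAbs : ℤ)) = k := Int.natAbs_of_nonneg h
    rw [hk, abs_of_nonneg]
    have := aux_L_nonneg hΛ k.natAbs
    rwa [hk] at this
  · have hk : ((k.natAbs : ℤ)) = -k := by omega
    have h2 : Λ k = -Λ (k.natAbs : ℤ) := by
      rw [hk]; rw [← hΛ.2.1 (-k)]; simp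
    rw [h2, abs_neg, abs_of_nonneg (aux_L_nonneg hΛ k.natAbs)]

lemma aux_telescope (hΛ : IsExponents Λ) {α : ℝ} (hα : 0 < α) (m : ℕ) :
    ∑ ν ∈ Finset.Icc 1 m, (Λ ν ^ α - Λ ((ν : ℤ) - 1) ^ α) = Λ m ^ α := by
  induction m with
  | zero => simp [hΛ.1, Real.zero_rpow hα.ne']
  | succ m ih =>
    rw [Finset.sum_Icc_succ_top (by omega : 1 ≤ m + 1), ih]
    have h1 : ((m + 1 : ℕ) : ℤ) - 1 = (m : ℤ) := by push_cast; ring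
    rw [h1]; ring

lemma aux_delta_nonneg (hΛ : IsExponents Λ) {α : ℝ} (hα : 0 < α) {ν : ℕ} (hν : 1 ≤ ν) :
    0 ≤ Λ ν ^ α - Λ ((ν : ℤ) - 1) ^ α := by
  have h1 : ((ν : ℤ) - 1) = ((ν - 1 : ℕ) : ℤ) := by omega
  rw [h1]
  have h2 : Λ ((ν - 1 : ℕ) : ℤ) ≤ Λ (ν : ℤ) := aux_L_mono hΛ (by omega : ν - 1 ≤ ν)
  have h3 := aux_L_nonneg hΛ (ν - 1)
  have := Real.rpow_le_rpow h3 h2 hα.le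
  linarith

lemma aux_phi_le (hΛ : IsExponents Λ) {α : ℝ} (hα : 0 < α) {n : ℕ} (hn : 1 ≤ n)
    {h : ℝ} (hh : |h| ≤ π / Λ n) (k : ℤ) :
    phiAlpha α (Λ k * h) ≤ (π / Λ n * Λ ((min k.natAbs n : ℕ) : ℤ)) ^ α := by
  have hLn : 0 < Λ (n : ℤ) := hΛ.2.2.1 n (by exact_mod_cast hn)
  have hc : 0 < π / Λ (n : ℤ) := div_pos Real.pi_pos hLn
  set t := Λ k * h with ht
  have hcos : 0 ≤ 1 - Real.cos t := by have := Real.cos_le_one t; linarith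
  -- phiAlpha α t = (2 * (1 - cos t)) ^ (α/2)
  have e1 : phiAlpha α t = (2 * (1 - Real.cos t)) ^ (α / 2) := by
    rw [phiAlpha, ← Real.mul_rpow (by norm_num) hcos]
  have hmin : 0 ≤ min |t| 2 := le_min (abs_nonneg t) (by norm_num)
  have e2 : (min |t| 2) ^ α = ((min |t| 2) ^ (2 : ℕ)) ^ (α / 2) := by
    rw [← Real.rpow_natCast (min |t| 2) 2, ← Real.rpow_mul hmin]
    congr 1
    push_cast
    ring
  have hb : 2 * (1 - Real.cos t) ≤ (min |t| 2) ^ (2 : ℕ) := by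
    rcases le_total |t| 2 with hle | hle
    · rw [min_eq_left hle]
      have := Real.one_sub_sq_div_two_le_cos (x := t)
      have habs : |t| ^ (2:ℕ) = t ^ (2:ℕ) := sq_abs t
      rw [habs]; nlinarith [Real.cos_le_one t]
    · rw [min_eq_right hle]
      have := Real.neg_one_le_cos t
      norm_num; linarith
  have step1 : phiAlpha α t ≤ (min |t| 2) ^ α := by
    rw [e1, e2]
    exact Real.rpow_le_rpow (by linarith) hb (by linarith)
  refine step1.trans (Real.rpow_le_rpow hmin ?_ hα.le)
  -- min |t| 2 ≤ π / Λ n * Λ (min k.natAbs n)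
  have habs : |t| = Λ (k.natAbs : ℤ) * |h| := by
    rw [ht, abs_mul, aux_L_abs hΛ]
  rcases le_total k.natAbs n with hkn | hkn
  · rw [min_eq_left hkn]
    calc min |t| 2 ≤ |t| := min_le_left _ _
      _ = Λ (k.natAbs : ℤ) * |h| := habs
      _ ≤ Λ (k.natAbs : ℤ) * (π / Λ n) := by
          exact mul_le_mul_of_nonneg_left hh (aux_L_nonneg hΛ k.natAbs)
      _ = π / Λ n * Λ (k.natAbs : ℤ) := by ring
  · rw [min_eq_right hkn]
    calc min |t| 2 ≤ 2 := min_le_right _ _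
      _ ≤ π := by linarith [Real.pi_gt_three]
      _ = π / Λ n * Λ (n : ℤ) := by field_simp

lemma aux_ind_sum (hΛ : IsExponents Λ) {α : ℝ} (hα : 0 < α) (n : ℕ) (k : ℤ) :
    ∑ ν ∈ Finset.Icc 1 n, (if (ν : ℤ) ≤ |k| then Λ ν ^ α - Λ ((ν : ℤ) - 1) ^ α else 0)
      = Λ ((min k.natAbs n : ℕ) : ℤ) ^ α := by
  rw [← aux_telescope hΛ hα (min k.natAbs n), ← Finset.sum_filter]
  congr 1
  ext ν
  simp only [Finset.mem_filter, Finset.mem_Icc, Int.abs_eq_natAbs]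
  omega

end AuxLemmas

/-- **Improved inverse theorem.** If `E_N(A) → 0`, then for every `n ∈ ℕ` and `α > 0`:
`ω_α(A, π/λ_n) ≤ (π/λ_n)^α Σ_{ν=1}^n (λ_ν^α - λ_{ν-1}^α) E_ν(A)`. -/
theorem inverse_theorem_improved
    (Λ : ℤ → ℝ) (M : ℤ → ℝ → ℝ) (A : ℤ → ℂ)
    (hΛ : IsExponents Λ) (hM : ∀ k, IsOrlicz (M k)) (hA : orliczNorm M A ≠ ⊤)
    (hE : Filter.Tendsto (fun N : ℕ => bestE M A N) Filter.atTop (nhds 0))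
    (n : ℕ) (hn : 1 ≤ n) (α : ℝ) (hα : 0 < α) :
    genMod Λ M A (phiAlpha α) (π / Λ n)
      ≤ ENNReal.ofReal ((π / Λ n) ^ α) *
          ∑ ν ∈ Finset.Icc 1 n,
            ENNReal.ofReal (Λ ν ^ α - Λ ((ν : ℤ) - 1) ^ α) * bestE M A ν := by
  have hLn : 0 < Λ (n : ℤ) := hΛ.2.2.1 n (by exact_mod_cast hn)
  have hc : (0:ℝ) ≤ π / Λ n := (div_pos Real.pi_pos hLn).le
  rw [genMod]
  refine iSup₂_le fun h hh => iSup₂_le fun γ hγ => ?_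
  have key : ∀ k : ℤ, ENNReal.ofReal (γ k * phiAlpha α (Λ k * h) * ‖A k‖)
      ≤ ENNReal.ofReal ((π / Λ n) ^ α) *
        ∑ ν ∈ Finset.Icc 1 n, (if (ν : ℤ) ≤ |k| then
            ENNReal.ofReal (Λ ν ^ α - Λ ((ν : ℤ) - 1) ^ α) *
              ENNReal.ofReal (γ k * ‖A k‖) else 0) := by
    intro k
    have hγk := (hγ.1 k).le
    have hAk : (0:ℝ) ≤ ‖A k‖ := norm_nonneg _
    have hga : (0:ℝ) ≤ γ k * ‖A k‖ := mul_nonneg hγk hAk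
    have hb := aux_phi_le hΛ hα hn hh k
    have hLm := aux_L_nonneg hΛ (min k.natAbs n)
    have step1 : γ k * phiAlpha α (Λ k * h) * ‖A k‖
        ≤ (π / Λ n) ^ α * (Λ ((min k.natAbs n : ℕ) : ℤ) ^ α * (γ k * ‖A k‖)) := by
      have hsplit : (π / Λ n * Λ ((min k.natAbs n : ℕ) : ℤ)) ^ α
          = (π / Λ n) ^ α * Λ ((min k.natAbs n : ℕ) : ℤ) ^ α := Real.mul_rpow hc hLm
      calc γ k * phiAlpha α (Λ k * h) * ‖A k‖
          = phiAlpha α (Λ k * h) * (γ k * ‖A k‖) := by ring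
        _ ≤ (π / Λ n * Λ ((min k.natAbs n : ℕ) : ℤ)) ^ α * (γ k * ‖A k‖) :=
            mul_le_mul_of_nonneg_right hb hga
        _ = (π / Λ n) ^ α * (Λ ((min k.natAbs n : ℕ) : ℤ) ^ α * (γ k * ‖A k‖)) := by
            rw [hsplit]; ring
    calc ENNReal.ofReal (γ k * phiAlpha α (Λ k * h) * ‖A k‖)
        ≤ ENNReal.ofReal ((π / Λ n) ^ α *
            (Λ ((min k.natAbs n : ℕ) : ℤ) ^ α * (γ k * ‖A k‖))) :=
          ENNReal.ofReal_le_ofReal step1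
      _ = ENNReal.ofReal ((π / Λ n) ^ α) *
            ENNReal.ofReal (Λ ((min k.natAbs n : ℕ) : ℤ) ^ α * (γ k * ‖A k‖)) :=
          ENNReal.ofReal_mul (Real.rpow_nonneg hc α)
      _ = _ := by
          congr 1
          rw [← aux_ind_sum hΛ hα n k, Finset.sum_mul,
            ENNReal.ofReal_sum_of_nonneg (fun ν hν => by
              split
              · exact mul_nonneg (aux_delta_nonneg hΛ hα (Finset.mem_Icc.mp hν).1) hga
              · simp [hga])]
          refine Finset.sum_congr rfl fun ν hν => ?_
          split
          · exact ENNReal.ofReal_mul (aux_delta_nonneg hΛ hα (Finset.mem_Icc.mp hν).1)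
          · simp
  calc (∑' k : ℤ, ENNReal.ofReal (γ k * phiAlpha α (Λ k * h) * ‖A k‖))
      ≤ ∑' k : ℤ, (ENNReal.ofReal ((π / Λ n) ^ α) *
        ∑ ν ∈ Finset.Icc 1 n, (if (ν : ℤ) ≤ |k| then
            ENNReal.ofReal (Λ ν ^ α - Λ ((ν : ℤ) - 1) ^ α) *
              ENNReal.ofReal (γ k * ‖A k‖) else 0)) := ENNReal.tsum_le_tsum key
    _ = ENNReal.ofReal ((π / Λ n) ^ α) * ∑ ν ∈ Finset.Icc 1 n,
          ENNReal.ofReal (Λ ν ^ α - Λ ((ν : ℤ) - 1) ^ α) *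
            ∑' k : ℤ, (if (ν : ℤ) ≤ |k| then ENNReal.ofReal (γ k * ‖A k‖) else 0) := by
        rw [ENNReal.tsum_mul_left]
        congr 1
        rw [Summable.tsum_finsetSum (fun ν _ => ENNReal.summable)]
        refine Finset.sum_congr rfl fun ν _ => ?_
        rw [← ENNReal.tsum_mul_left]
        refine tsum_congr fun k => ?_
        split <;> simp
    _ ≤ _ := by
        refine mul_le_mul_right (Finset.sum_le_sum fun ν hν => ?_) _
        refine mul_le_mul_right ?_ _
        rw [bestE]
        exact le_iSup₂_of_le γ hγ le_rfl


end
end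

section
/- (Sharpness of the constant π^α in the improved inverse theorem.) Assume λ_n → ∞ as n → ∞. Let α > 0, let k_0 ∈ ℕ, and let A : ℤ → ℂ be given by A_{k_0} = 1 and A_k = 0 for k ≠ k_0 (the coefficients of the function e^{iλ_{k_0}x}); assume c := sup{γ_{k_0} : γ ∈ Γ} satisfies 0 < c < ∞. Then for every ε with 0 < ε < π^α there exists n_0 ∈ ℕ such that for all n > n_0: ω_α(A, π/λ_n) > ((π^α − ε)/λ_n^α) · Σ_{ν=1}^{n} (λ_ν^α − λ_{ν−1}^α) E_ν(A), where λ_0 = 0. -/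
open MeasureTheory Real Filter Finset intervalIntegral
open scoped ENNReal Topology

noncomputable section

set_option maxHeartbeats 1000000 in
/-- Auxiliary analytic estimate: near `0`, `phiAlpha α t ≥ q t^α` for any `q < 1`. -/
lemma phiAlpha_lower (α : ℝ) (hα : 0 < α) (q : ℝ) (hq0 : 0 < q) (hq1 : q < 1) :
    ∃ T : ℝ, 0 < T ∧ ∀ t : ℝ, 0 < t → t ≤ T → q * t ^ α ≤ phiAlpha α t := by
  set r : ℝ := q ^ (α⁻¹) with hr
  have hr0 : 0 < r := Real.rpow_pos_of_pos hq0 _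
  have hr1 : r < 1 := Real.rpow_lt_one hq0.le hq1 (by positivity)
  refine ⟨min 2 (4 * Real.sqrt (1 - r)), ?_, ?_⟩
  · apply lt_min (by norm_num)
    have : 0 < Real.sqrt (1 - r) := Real.sqrt_pos.mpr (by linarith)
    linarith
  intro t ht htT
  have ht2 : 0 < t / 2 := by linarith
  have ht21 : t / 2 ≤ 1 := by
    have : t ≤ 2 := le_trans htT (min_le_left _ _)
    linarith
  have hsin : t / 2 - (t / 2) ^ 3 / 4 < Real.sin (t / 2) := by
    have := Real.sin_gt_sub_cube ht2; linarith [pow_pos ht2 3]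
  have hsqrt : (t / 2) ^ 2 ≤ 4 * (1 - r) := by
    have h1 : t ≤ 4 * Real.sqrt (1 - r) := le_trans htT (min_le_right _ _)
    have h2 : t / 2 ≤ 2 * Real.sqrt (1 - r) := by linarith
    have h3 : (t / 2) ^ 2 ≤ (2 * Real.sqrt (1 - r)) ^ 2 :=
      pow_le_pow_left₀ ht2.le h2 2
    have h4 : Real.sqrt (1 - r) ^ 2 = 1 - r := Real.sq_sqrt (by linarith)
    nlinarith
  have hrle : r ≤ 1 - (t / 2) ^ 2 / 4 := by nlinarith
  have e1 : (t / 2) * r ≤ (t / 2) * (1 - (t / 2) ^ 2 / 4) :=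
    mul_le_mul_of_nonneg_left hrle ht2.le
  have e2 : (t / 2) * (1 - (t / 2) ^ 2 / 4) = t / 2 - (t / 2) ^ 3 / 4 := by ring
  have hsin2 : t * r ≤ 2 * Real.sin (t / 2) := by linarith
  have htr : 0 < (t / 2) * r := by positivity
  have hsinpos : 0 < Real.sin (t / 2) := by linarith
  have hcos : 1 - Real.cos t = 2 * Real.sin (t / 2) ^ 2 := by
    have h := Real.cos_two_mul (t / 2)
    have h' : 2 * (t / 2) = t := by ring
    rw [h'] at h
    have hpy := Real.sin_sq_add_cos_sq (t / 2)
    nlinarith [h, hpy]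
  have hphi : phiAlpha α t = (2 * Real.sin (t / 2)) ^ α := by
    rw [phiAlpha, hcos, ← Real.mul_rpow (by norm_num) (by positivity)]
    have he : (2 : ℝ) * (2 * Real.sin (t / 2) ^ 2) = (2 * Real.sin (t / 2)) ^ 2 := by ring
    rw [he, ← Real.rpow_two, ← Real.rpow_mul (by positivity)]
    congr 1
    ring
  rw [hphi]
  calc q * t ^ α = (t * r) ^ α := by
        rw [Real.mul_rpow ht.le hr0.le, hr,
          ← Real.rpow_mul hq0.le, inv_mul_cancel₀ hα.ne', Real.rpow_one]
        ring
    _ ≤ (2 * Real.sin (t / 2)) ^ α :=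
        Real.rpow_le_rpow (by positivity) hsin2 hα.le

set_option maxHeartbeats 1000000 in
/-- Auxiliary: upper bound for `bestE` of a delta sequence. -/
lemma bestE_delta_le (M : ℤ → ℝ → ℝ) (A : ℤ → ℂ) (k₀ : ℕ)
    (hAdef : ∀ k : ℤ, A k = if k = (k₀ : ℤ) then 1 else 0) (c : ℝ)
    (hγle : ∀ γ ∈ GammaSet M, γ (k₀ : ℤ) ≤ c) (ν : ℕ) :
    bestE M A ν ≤ ENNReal.ofReal c := by
  have hAk₀ : ‖A (k₀ : ℤ)‖ = 1 := by rw [hAdef]; simp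
  have hAne : ∀ k : ℤ, k ≠ (k₀ : ℤ) → ‖A k‖ = 0 := by
    intro k hk; rw [hAdef]; simp [hk]
  refine iSup₂_le fun γ hγ => ?_
  rw [tsum_eq_single (k₀ : ℤ) ?_]
  · split_ifs with h
    · rw [hAk₀, mul_one]
      exact ENNReal.ofReal_le_ofReal (hγle γ hγ)
    · exact zero_le
  · intro k hk
    simp [hAne k hk]

set_option maxHeartbeats 1000000 in
/-- Auxiliary: `bestE` of a delta sequence vanishes beyond `k₀`. -/
lemma bestE_delta_zero (M : ℤ → ℝ → ℝ) (A : ℤ → ℂ) (k₀ : ℕ)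
    (hAdef : ∀ k : ℤ, A k = if k = (k₀ : ℤ) then 1 else 0) (ν : ℕ) (hν : k₀ < ν) :
    bestE M A ν = 0 := by
  have hAne : ∀ k : ℤ, k ≠ (k₀ : ℤ) → ‖A k‖ = 0 := by
    intro k hk; rw [hAdef]; simp [hk]
  refine le_antisymm (iSup₂_le fun γ hγ =>
    le_of_eq (ENNReal.tsum_eq_zero.mpr fun k => ?_)) zero_le
  by_cases hk : k = (k₀ : ℤ)
  · subst hk
    have hcond : ¬ ((ν : ℤ) ≤ |(k₀ : ℤ)|) := by
      rw [abs_of_nonneg (by positivity : (0:ℤ) ≤ (k₀:ℤ))]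
      exact_mod_cast not_le.mpr hν
    rw [if_neg hcond]
  · simp [hAne k hk]

set_option maxHeartbeats 1000000 in
/-- Auxiliary: lower bound for `genMod` of a delta sequence. -/
lemma genMod_delta_ge (Λ : ℤ → ℝ) (M : ℤ → ℝ → ℝ) (A : ℤ → ℂ) (k₀ : ℕ)
    (hAdef : ∀ k : ℤ, A k = if k = (k₀ : ℤ) then 1 else 0)
    (φ : ℝ → ℝ) (δ : ℝ) (h : ℝ) (hh : |h| ≤ δ) (γ : ℤ → ℝ) (hγ : γ ∈ GammaSet M) :
    ENNReal.ofReal (γ (k₀ : ℤ) * φ (Λ (k₀ : ℤ) * h)) ≤ genMod Λ M A φ δ := by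
  have hAk₀ : ‖A (k₀ : ℤ)‖ = 1 := by rw [hAdef]; simp
  rw [genMod]
  refine le_iSup_of_le h ?_
  refine le_iSup_of_le hh ?_
  refine le_iSup_of_le γ (le_iSup_of_le hγ ?_)
  refine le_trans ?_ (ENNReal.le_tsum (k₀ : ℤ))
  rw [hAk₀, mul_one]

/-- **Sharpness of the constant `π^α` in the improved inverse theorem.** For the
coefficient sequence of `e^{iλ_{k₀}x}`, for every `0 < ε < π^α` there exists `n₀`
such that for all `n > n₀`:
`ω_α(A, π/λ_n) > ((π^α - ε)/λ_n^α) Σ_{ν=1}^n (λ_ν^α - λ_{ν-1}^α) E_ν(A)`. -/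
theorem inverse_theorem_constant_sharp
    (Λ : ℤ → ℝ) (M : ℤ → ℝ → ℝ)
    (hΛ : IsExponents Λ) (hM : ∀ k, IsOrlicz (M k))
    (hΛtop : Filter.Tendsto (fun n : ℕ => Λ n) Filter.atTop Filter.atTop)
    (α : ℝ) (hα : 0 < α) (k₀ : ℕ) (hk₀ : 1 ≤ k₀)
    (A : ℤ → ℂ) (hAdef : ∀ k : ℤ, A k = if k = (k₀ : ℤ) then 1 else 0)
    (hbdd : BddAbove {x : ℝ | ∃ γ ∈ GammaSet M, x = γ (k₀ : ℤ)})
    (hpos : 0 < sSup {x : ℝ | ∃ γ ∈ GammaSet M, x = γ (k₀ : ℤ)}) :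
    ∀ ε : ℝ, 0 < ε → ε < π ^ α →
      ∃ n₀ : ℕ, ∀ n : ℕ, n₀ < n →
        ENNReal.ofReal ((π ^ α - ε) / Λ n ^ α) *
            ∑ ν ∈ Finset.Icc 1 n,
              ENNReal.ofReal (Λ ν ^ α - Λ ((ν : ℤ) - 1) ^ α) * bestE M A ν
          < genMod Λ M A (phiAlpha α) (π / Λ n) := by
  intro ε hε hεπ
  obtain ⟨hΛ0, hΛneg, hΛpos, hΛstep⟩ := hΛ
  set S := {x : ℝ | ∃ γ ∈ GammaSet M, x = γ (k₀ : ℤ)} with hS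
  set c := sSup S with hc
  have hπα : (0:ℝ) < π ^ α := Real.rpow_pos_of_pos Real.pi_pos α
  set β : ℝ := π ^ α - ε / 2 with hβ
  have hβpos : 0 < β := by rw [hβ]; linarith
  have hβlt : β < π ^ α := by rw [hβ]; linarith
  have hεβ : π ^ α - ε < β := by rw [hβ]; linarith
  have hSne : S.Nonempty := by
    by_contra hne
    rw [Set.not_nonempty_iff_eq_empty] at hne
    rw [hc, hne, Real.sSup_empty] at hpos
    exact lt_irrefl 0 hpos
  have hlt : c * (π ^ α - ε) / β < c := by
    rw [div_lt_iff₀ hβpos]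
    exact mul_lt_mul_of_pos_left hεβ hpos
  obtain ⟨x, hxS, hxgt⟩ := exists_lt_of_lt_csSup hSne hlt
  obtain ⟨γ₀, hγ₀Γ, rfl⟩ := hxS
  have hγ₀pos : 0 < γ₀ (k₀ : ℤ) := hγ₀Γ.1 _
  have hγ₀β : c * (π ^ α - ε) < γ₀ (k₀ : ℤ) * β := (div_lt_iff₀ hβpos).mp hxgt
  have hγle : ∀ γ ∈ GammaSet M, γ (k₀ : ℤ) ≤ c :=
    fun γ hγ => le_csSup hbdd ⟨γ, hγ, rfl⟩
  -- Λ facts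
  have hΛnat_nonneg : ∀ m : ℕ, 0 ≤ Λ m := by
    intro m
    rcases Nat.eq_zero_or_pos m with h | h
    · subst h; simp [hΛ0]
    · exact (hΛpos m (by exact_mod_cast h)).le
  have hd_nonneg : ∀ ν : ℕ, 1 ≤ ν → 0 ≤ Λ ν ^ α - Λ ((ν : ℤ) - 1) ^ α := by
    intro ν hν
    have h0 : 0 ≤ Λ ((ν : ℤ) - 1) := by
      rcases eq_or_lt_of_le hν with h | h
      · rw [← h]; norm_num [hΛ0]
      · exact (hΛpos _ (by exact_mod_cast Nat.le_sub_one_of_lt h)).le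
    have h1 : Λ ((ν : ℤ) - 1) ≤ Λ ν := by
      rcases eq_or_lt_of_le hν with h | h
      · rw [← h]; norm_num [hΛ0]
        exact (hΛpos 1 le_rfl).le
      · have h2 : (1:ℤ) ≤ (ν : ℤ) - 1 := by exact_mod_cast Nat.le_sub_one_of_lt h
        have := hΛstep ((ν:ℤ) - 1) h2
        rw [sub_add_cancel] at this
        exact this.le
    have := Real.rpow_le_rpow h0 h1 hα.le
    linarith
  -- telescoping
  have htel : ∀ m : ℕ, ∑ ν ∈ Finset.Icc 1 m, (Λ ν ^ α - Λ ((ν : ℤ) - 1) ^ α) = Λ m ^ α := by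
    intro m
    induction m with
    | zero => simp [hΛ0, Real.zero_rpow hα.ne']
    | succ m ih =>
      rw [Finset.sum_Icc_succ_top (by omega : 1 ≤ m + 1), ih]
      have hcast : ((m + 1 : ℕ) : ℤ) - 1 = (m : ℤ) := by push_cast; ring
      rw [hcast]
      ring
  have hΛk₀ : 0 < Λ (k₀ : ℤ) := hΛpos _ (by exact_mod_cast hk₀)
  -- key analytic estimate
  obtain ⟨T, hT0, hkey⟩ := phiAlpha_lower α hα (β / π ^ α)
    (div_pos hβpos hπα) ((div_lt_one hπα).mpr hβlt)
  -- choose n₀ via Λ n → ∞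
  obtain ⟨N, hN⟩ := eventually_atTop.mp (tendsto_atTop.mp hΛtop (Λ (k₀ : ℤ) * π / T))
  refine ⟨max N k₀, fun n hn => ?_⟩
  have hnN : N ≤ n := le_of_lt (lt_of_le_of_lt (le_max_left _ _) hn)
  have hk₀n : k₀ < n := lt_of_le_of_lt (le_max_right _ _) hn
  have hn1 : 1 ≤ n := le_trans hk₀ hk₀n.le
  have hΛn : 0 < Λ (n : ℤ) := hΛpos _ (by exact_mod_cast hn1)
  have hΛnα : 0 < Λ (n : ℤ) ^ α := Real.rpow_pos_of_pos hΛn _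
  set t : ℝ := Λ (k₀ : ℤ) * (π / Λ (n : ℤ)) with htdef
  have ht0 : 0 < t := by positivity
  have htT : t ≤ T := by
    have h1 : Λ (k₀ : ℤ) * π / T ≤ Λ (n : ℤ) := hN n hnN
    rw [div_le_iff₀ hT0] at h1
    rw [htdef, mul_div_assoc', div_le_iff₀ hΛn]
    linarith
  -- bound the sum
  have hsum_le : ∑ ν ∈ Finset.Icc 1 n,
      ENNReal.ofReal (Λ ν ^ α - Λ ((ν : ℤ) - 1) ^ α) * bestE M A ν
      ≤ ENNReal.ofReal (Λ (k₀ : ℤ) ^ α * c) := by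
    rw [← Finset.sum_subset (Finset.Icc_subset_Icc_right hk₀n.le)
      (fun ν hν1 hν => ?_)]
    · calc ∑ ν ∈ Finset.Icc 1 k₀,
            ENNReal.ofReal (Λ ν ^ α - Λ ((ν : ℤ) - 1) ^ α) * bestE M A ν
          ≤ ∑ ν ∈ Finset.Icc 1 k₀,
            ENNReal.ofReal (Λ ν ^ α - Λ ((ν : ℤ) - 1) ^ α) * ENNReal.ofReal c :=
            Finset.sum_le_sum fun ν _ =>
              mul_le_mul_right (bestE_delta_le M A k₀ hAdef c hγle ν) _
        _ = (∑ ν ∈ Finset.Icc 1 k₀,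
            ENNReal.ofReal (Λ ν ^ α - Λ ((ν : ℤ) - 1) ^ α)) * ENNReal.ofReal c := by
            rw [Finset.sum_mul]
        _ = ENNReal.ofReal (Λ (k₀ : ℤ) ^ α) * ENNReal.ofReal c := by
            rw [← ENNReal.ofReal_sum_of_nonneg
              (fun ν hν => hd_nonneg ν (Finset.mem_Icc.mp hν).1), htel k₀]
        _ = ENNReal.ofReal (Λ (k₀ : ℤ) ^ α * c) := by
            rw [ENNReal.ofReal_mul (Real.rpow_nonneg (hΛnat_nonneg k₀) α)]
    · have hgt : k₀ < ν := by
        rcases Finset.mem_Icc.mp hν1 with ⟨h1, _⟩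
        by_contra hcon
        exact hν (Finset.mem_Icc.mpr ⟨h1, not_lt.mp hcon⟩)
      rw [bestE_delta_zero M A k₀ hAdef ν hgt, mul_zero]
  -- lower bound for genMod
  have habs : |π / Λ (n : ℤ)| ≤ π / Λ (n : ℤ) :=
    le_of_eq (abs_of_pos (by positivity))
  have hgen : ENNReal.ofReal (γ₀ (k₀ : ℤ) * phiAlpha α t)
      ≤ genMod Λ M A (phiAlpha α) (π / Λ (n : ℤ)) := by
    have := genMod_delta_ge Λ M A k₀ hAdef (phiAlpha α) (π / Λ (n : ℤ))
      (π / Λ (n : ℤ)) habs γ₀ hγ₀Γ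
    rwa [← htdef] at this
  have hφpos : 0 < phiAlpha α t :=
    lt_of_lt_of_le (by positivity) (hkey t ht0 htT)
  have hnum : 0 ≤ (π ^ α - ε) / Λ (n : ℤ) ^ α :=
    div_nonneg (by linarith) hΛnα.le
  -- final combination
  calc ENNReal.ofReal ((π ^ α - ε) / Λ (n : ℤ) ^ α) *
        ∑ ν ∈ Finset.Icc 1 n,
          ENNReal.ofReal (Λ ν ^ α - Λ ((ν : ℤ) - 1) ^ α) * bestE M A ν
      ≤ ENNReal.ofReal ((π ^ α - ε) / Λ (n : ℤ) ^ α) *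
          ENNReal.ofReal (Λ (k₀ : ℤ) ^ α * c) := mul_le_mul_right hsum_le _
    _ = ENNReal.ofReal ((π ^ α - ε) / Λ (n : ℤ) ^ α * (Λ (k₀ : ℤ) ^ α * c)) :=
        (ENNReal.ofReal_mul hnum).symm
    _ < ENNReal.ofReal (γ₀ (k₀ : ℤ) * phiAlpha α t) := by
        rw [ENNReal.ofReal_lt_ofReal_iff (mul_pos hγ₀pos hφpos)]
        have hX : 0 < Λ (k₀ : ℤ) ^ α / Λ (n : ℤ) ^ α :=
          div_pos (Real.rpow_pos_of_pos hΛk₀ _) hΛnα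
        have h1 : (π ^ α - ε) / Λ (n : ℤ) ^ α * (Λ (k₀ : ℤ) ^ α * c)
            = c * (π ^ α - ε) * (Λ (k₀ : ℤ) ^ α / Λ (n : ℤ) ^ α) := by ring
        have htα : t ^ α = Λ (k₀ : ℤ) ^ α * (π ^ α / Λ (n : ℤ) ^ α) := by
          rw [htdef, Real.mul_rpow hΛk₀.le (by positivity),
            Real.div_rpow Real.pi_pos.le hΛn.le]
        have h2 : γ₀ (k₀ : ℤ) * (β / π ^ α * t ^ α)
            = γ₀ (k₀ : ℤ) * β * (Λ (k₀ : ℤ) ^ α / Λ (n : ℤ) ^ α) := by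
          rw [htα]; field_simp
        have h3 : c * (π ^ α - ε) * (Λ (k₀ : ℤ) ^ α / Λ (n : ℤ) ^ α)
            < γ₀ (k₀ : ℤ) * β * (Λ (k₀ : ℤ) ^ α / Λ (n : ℤ) ^ α) :=
          mul_lt_mul_of_pos_right hγ₀β hX
        have h4 : γ₀ (k₀ : ℤ) * (β / π ^ α * t ^ α) ≤ γ₀ (k₀ : ℤ) * phiAlpha α t :=
          mul_le_mul_of_nonneg_left (hkey t ht0 htT) hγ₀pos.le
        linarith
    _ ≤ genMod Λ M A (phiAlpha α) (π / Λ (n : ℤ)) := hgen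

end
end

section
/- (Direct part of the constructive characterization.) Assume λ_n → ∞ as n → ∞. Let ω : [0,1] → [0,∞) be a majorant: continuous on [0,1], nondecreasing, ω(δ) > 0 for δ ∈ (0,1], and ω(δ) → 0 as δ → 0+. Let α > 0. If ω_α(A,δ) = O(ω(δ)) as δ → 0+ (i.e. there exist constants C > 0 and δ_0 ∈ (0,1] with ω_α(A,δ) ≤ C ω(δ) for all 0 < δ ≤ δ_0), then E_n(A) = O(ω(1/λ_n)) as n → ∞ (i.e. there exist C' > 0 and n_0 ∈ ℕ with E_n(A) ≤ C' ω(1/λ_n) for all n ≥ n_0). -/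
open MeasureTheory Real Filter Finset intervalIntegral
open scoped ENNReal Topology

noncomputable section

lemma fcont {α : ℝ} (hα : 0 < α) :
    Continuous fun s : ℝ => (1 - Real.cos s) ^ (α / 2) := by
  rw [continuous_iff_continuousAt]
  intro x
  exact (Real.continuousAt_rpow_const _ _ (Or.inr (by positivity))).comp
    ((continuous_const.sub Real.continuous_cos).continuousAt)

lemma fnn {α : ℝ} (s : ℝ) : 0 ≤ (1 - Real.cos s) ^ (α / 2) :=
  Real.rpow_nonneg (by nlinarith [Real.cos_le_one s]) _

lemma lemL {α : ℝ} (hα : 0 < α) :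
    ∃ c > (0:ℝ), ∀ S : ℝ, 1 ≤ S →
      c * S ≤ ∫ s in (0:ℝ)..S, (1 - Real.cos s) ^ (α / 2) := by
  set f : ℝ → ℝ := fun s => (1 - Real.cos s) ^ (α / 2) with hf
  have hfc : Continuous f := fcont hα
  have hint : ∀ a b : ℝ, IntervalIntegrable f volume a b :=
    fun a b => hfc.intervalIntegrable a b
  have hnn : ∀ s, 0 ≤ f s := fun s => fnn s
  have hmono : ∀ a b : ℝ, 0 ≤ a → a ≤ b →
      (∫ s in (0:ℝ)..a, f s) ≤ ∫ s in (0:ℝ)..b, f s := by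
    intro a b _ hab
    rw [← intervalIntegral.integral_add_adjacent_intervals (hint 0 a) (hint a b)]
    have : 0 ≤ ∫ s in a..b, f s :=
      intervalIntegral.integral_nonneg hab (fun x _ => hnn x)
    linarith
  set I : ℝ := ∫ s in (0:ℝ)..1, f s with hI
  have hIpos : 0 < I := by
    apply intervalIntegral.intervalIntegral_pos_of_pos_on (hint 0 1)
    · intro x hx
      have hcos : Real.cos x < 1 := by
        have := Real.strictAntiOn_cos
          (Set.mem_Icc.mpr ⟨le_refl 0, Real.pi_pos.le⟩)
          (Set.mem_Icc.mpr ⟨hx.1.le, by nlinarith [Real.pi_gt_three, hx.2]⟩) hx.1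
        simpa using this
      exact Real.rpow_pos_of_pos (by linarith) _
    · norm_num
  have hper : Function.Periodic f (2 * π) := by
    intro x; simp [hf, Real.cos_add_two_pi]
  set J : ℝ := ∫ s in (0:ℝ)..(2*π), f s with hJ
  have hIJ : I ≤ J := hmono 1 (2*π) (by norm_num) (by nlinarith [Real.pi_gt_three])
  refine ⟨I / (4 * π), by positivity, ?_⟩
  intro S hS
  rcases le_or_gt S (2 * π) with hS2 | hS2
  · have h1 : I / (4 * π) * S ≤ I / 2 := by
      rw [div_mul_eq_mul_div, div_le_div_iff₀ (by positivity) (by norm_num)]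
      nlinarith [hIpos]
    have h2 : I ≤ ∫ s in (0:ℝ)..S, f s := hmono 1 S (by norm_num) hS
    linarith
  · set n : ℤ := ⌊S / (2 * π)⌋ with hn
    have hpi : (0:ℝ) < 2 * π := by positivity
    have hn1 : (1:ℝ) ≤ (n:ℝ) := by
      rw [hn]
      exact_mod_cast Int.le_floor.mpr (by rw [le_div_iff₀ hpi]; push_cast; linarith)
    have hnS : (n:ℝ) * (2 * π) ≤ S := by
      have := Int.floor_le (S / (2 * π))
      calc (n:ℝ) * (2*π) ≤ S / (2*π) * (2*π) := by
            apply mul_le_mul_of_nonneg_right this hpi.le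
        _ = S := by field_simp
    have hkey : (∫ s in (0:ℝ)..(n:ℝ) * (2*π), f s) = (n:ℝ) * J := by
      have := hper.intervalIntegral_add_zsmul_eq n 0 hint
      simpa [zsmul_eq_mul] using this
    have hge : (n:ℝ) * J ≤ ∫ s in (0:ℝ)..S, f s := by
      rw [← hkey]
      exact hmono ((n:ℝ) * (2*π)) S (by positivity) hnS
    have hnhalf : S / (4 * π) ≤ (n:ℝ) := by
      have hfl : S / (2 * π) - 1 ≤ (n:ℝ) := by
        have := Int.sub_one_lt_floor (S / (2 * π))
        push_cast at this ⊢; linarith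
      rcases le_or_gt S (4 * π) with h4 | h4
      · have : S / (4 * π) ≤ 1 := by
          rw [div_le_one (by positivity)]; linarith
        linarith
      · have : S / (4 * π) ≤ S / (2 * π) - 1 := by
          rw [div_sub' hpi.ne', div_le_div_iff₀ (by positivity) hpi]
          nlinarith [Real.pi_gt_three]
        linarith
    have : I / (4 * π) * S = S / (4 * π) * I := by ring
    rw [this]
    calc S / (4 * π) * I ≤ (n:ℝ) * J := by
          apply mul_le_mul hnhalf hIJ hIpos.le (by linarith)
      _ ≤ _ := hge

lemma phiAlpha_cont {α : ℝ} (hα : 0 < α) : Continuous (phiAlpha α) :=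
  continuous_const.mul (fcont hα)

lemma phiAlpha_ge {α : ℝ} (hα : 0 < α) (t : ℝ) :
    (1 - Real.cos t) ^ (α / 2) ≤ phiAlpha α t := by
  have h1 : (1:ℝ) ≤ 2 ^ (α / 2) :=
    Real.one_le_rpow one_le_two (by positivity)
  have h2 : (0:ℝ) ≤ (1 - Real.cos t) ^ (α / 2) :=
    Real.rpow_nonneg (by nlinarith [Real.cos_le_one t]) _
  unfold phiAlpha; nlinarith

lemma lam_mono {Λ : ℤ → ℝ} (hΛ : IsExponents Λ) :
    ∀ m k : ℤ, 1 ≤ m → m ≤ k → Λ m ≤ Λ k := by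
  intro m k hm
  refine Int.le_induction (motive := fun j _ => Λ m ≤ Λ j) ?_ ?_ k
  · exact le_refl _
  · intro j hj ih
    exact ih.trans (hΛ.2.2.2 j (hm.trans hj)).le

lemma lam_abs {Λ : ℤ → ℝ} (hΛ : IsExponents Λ) {n : ℕ} (hn : 1 ≤ n)
    {k : ℤ} (hk : (n:ℤ) ≤ |k|) : Λ n ≤ |Λ k| := by
  have hn1 : (1:ℤ) ≤ (n:ℤ) := by exact_mod_cast hn
  have h1 : Λ n ≤ Λ |k| := lam_mono hΛ n |k| hn1 hk
  rcases le_or_gt 0 k with h | h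
  · have hke : |k| = k := abs_of_nonneg h
    rw [hke] at h1
    calc Λ n ≤ Λ k := h1
      _ ≤ |Λ k| := le_abs_self _
  · have hke : |k| = -k := abs_of_neg h
    rw [hke] at h1
    have h2 : Λ (-k) = -Λ k := hΛ.2.1 k
    rw [h2] at h1
    calc Λ n ≤ -Λ k := h1
      _ ≤ |Λ k| := neg_le_abs _


/-- **Direct part of the constructive characterization.** If `ω` is a majorant and
`ω_α(A,δ) = O(ω(δ))` as `δ → 0+`, then `E_n(A) = O(ω(1/λ_n))` as `n → ∞`. -/
theorem constructive_characterization_direct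
    (Λ : ℤ → ℝ) (M : ℤ → ℝ → ℝ) (A : ℤ → ℂ)
    (hΛ : IsExponents Λ) (hM : ∀ k, IsOrlicz (M k)) (hA : orliczNorm M A ≠ ⊤)
    (hΛtop : Filter.Tendsto (fun n : ℕ => Λ n) Filter.atTop Filter.atTop)
    (ω : ℝ → ℝ) (hωc : ContinuousOn ω (Set.Icc 0 1))
    (hωm : MonotoneOn ω (Set.Icc 0 1))
    (hωpos : ∀ δ ∈ Set.Ioc (0 : ℝ) 1, 0 < ω δ)
    (hω0 : Filter.Tendsto ω (nhdsWithin 0 (Set.Ioi 0)) (nhds 0))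
    (α : ℝ) (hα : 0 < α)
    (hO : ∃ C > (0 : ℝ), ∃ δ₀ ∈ Set.Ioc (0 : ℝ) 1, ∀ δ : ℝ, 0 < δ → δ ≤ δ₀ →
      genMod Λ M A (phiAlpha α) δ ≤ ENNReal.ofReal (C * ω δ)) :
    ∃ C' > (0 : ℝ), ∃ n₀ : ℕ, ∀ n : ℕ, n₀ ≤ n →
      bestE M A n ≤ ENNReal.ofReal (C' * ω (1 / Λ n)) := by
  obtain ⟨C, hC, δ₀, hδ₀, hbound⟩ := hO
  obtain ⟨c, hc, hcS⟩ := lemL hα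
  obtain ⟨n₀, hn₀⟩ := Filter.eventually_atTop.mp
    (hΛtop.eventually_ge_atTop (max 1 (1 / δ₀)))
  refine ⟨C / c, by positivity, max n₀ 1, ?_⟩
  intro n hn
  have hn1 : 1 ≤ n := le_trans (le_max_right _ _) hn
  have hΛn : max 1 (1/δ₀) ≤ Λ n := hn₀ n (le_trans (le_max_left _ _) hn)
  have hΛn1 : (1:ℝ) ≤ Λ n := le_trans (le_max_left _ _) hΛn
  have hΛnpos : (0:ℝ) < Λ n := by linarith
  set δ : ℝ := 1 / Λ n with hδ
  have hδpos : 0 < δ := by rw [hδ]; positivity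
  have hδδ₀ : δ ≤ δ₀ := by
    rw [hδ, div_le_iff₀ hΛnpos]
    have h2 : 1/δ₀ ≤ Λ n := le_trans (le_max_right _ _) hΛn
    rw [div_le_iff₀ hδ₀.1] at h2
    linarith
  have hδ1 : δ ≤ 1 := by rw [hδ, div_le_one hΛnpos]; exact hΛn1
  have hωδpos : 0 < ω δ := hωpos δ ⟨hδpos, hδ1⟩
  -- key per-k integral bound
  have hkey : ∀ k : ℤ, (n:ℤ) ≤ |k| →
      c * δ ≤ ∫ t in (0:ℝ)..δ, phiAlpha α (Λ k * t) := by
    intro k hk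
    have hl : Λ (n:ℤ) ≤ |Λ k| := lam_abs hΛ hn1 hk
    have hlpos : (0:ℝ) < |Λ k| := lt_of_lt_of_le hΛnpos hl
    set l : ℝ := |Λ k| with hldef
    have heq : ∀ t : ℝ, phiAlpha α (l * t) = phiAlpha α (Λ k * t) := by
      intro t
      rcases abs_cases (Λ k) with ⟨h1, _⟩ | ⟨h1, _⟩
      · rw [hldef, h1]
      · rw [hldef, h1, neg_mul, phiAlpha_neg]
    have hS1 : 1 ≤ l * δ := by
      rw [hδ, mul_one_div, le_div_iff₀ hΛnpos]
      linarith
    have hstep : c * δ ≤ ∫ t in (0:ℝ)..δ, (1 - Real.cos (l * t)) ^ (α/2) := by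
      rw [intervalIntegral.integral_comp_mul_left
        (fun s => (1 - Real.cos s) ^ (α/2)) hlpos.ne']
      rw [mul_zero, smul_eq_mul]
      have h2 := hcS (l * δ) hS1
      have h3 : l⁻¹ * (c * (l * δ)) ≤
          l⁻¹ * ∫ s in (0:ℝ)..l*δ, (1 - Real.cos s) ^ (α/2) :=
        mul_le_mul_of_nonneg_left h2 (inv_nonneg.mpr hlpos.le)
      calc c * δ = l⁻¹ * (c * (l * δ)) := by field_simp
        _ ≤ _ := h3
    have hint1 : IntervalIntegrable (fun t => (1 - Real.cos (l * t)) ^ (α/2)) volume 0 δ :=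
      ((fcont hα).comp (continuous_const.mul continuous_id)).intervalIntegrable 0 δ
    have hint2 : IntervalIntegrable (fun t => phiAlpha α (l * t)) volume 0 δ :=
      ((phiAlpha_cont hα).comp (continuous_const.mul continuous_id)).intervalIntegrable 0 δ
    calc c * δ ≤ ∫ t in (0:ℝ)..δ, (1 - Real.cos (l * t)) ^ (α/2) := hstep
      _ ≤ ∫ t in (0:ℝ)..δ, phiAlpha α (l * t) :=
          intervalIntegral.integral_mono_on hδpos.le hint1 hint2
            (fun x _ => phiAlpha_ge hα _)
      _ = ∫ t in (0:ℝ)..δ, phiAlpha α (Λ k * t) := by simp_rw [heq]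
  -- ENNReal chain
  rw [bestE]
  refine iSup₂_le fun γ hγ => ?_
  have hγpos := hγ.1
  set g : ℤ → ℝ → ℝ≥0∞ := fun k t =>
    ENNReal.ofReal (γ k * phiAlpha α (Λ k * t) * ‖A k‖) with hg
  have hgc : ∀ k : ℤ, Continuous fun t => γ k * phiAlpha α (Λ k * t) * ‖A k‖ :=
    fun k => (continuous_const.mul
      ((phiAlpha_cont hα).comp (continuous_const.mul continuous_id))).mul continuous_const
  have hgnn : ∀ k t, 0 ≤ γ k * phiAlpha α (Λ k * t) * ‖A k‖ :=
    fun k t => mul_nonneg (mul_nonneg (hγpos k).le (phiAlpha_nonneg α _))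
      (norm_nonneg _)
  have hmain : (∑' k : ℤ, if (n:ℤ) ≤ |k| then
        ENNReal.ofReal (γ k * ‖A k‖) else 0) * ENNReal.ofReal (c * δ)
      ≤ ENNReal.ofReal (C * ω δ) * ENNReal.ofReal δ := by
    rw [← ENNReal.tsum_mul_right]
    have hterm : ∀ k : ℤ,
        (if (n:ℤ) ≤ |k| then ENNReal.ofReal (γ k * ‖A k‖) else 0)
          * ENNReal.ofReal (c * δ) ≤ ∫⁻ t in Set.Ioc 0 δ, g k t := by
      intro k
      split_ifs with hk
      · have hint : IntegrableOn (fun t => γ k * phiAlpha α (Λ k * t) * ‖A k‖)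
            (Set.Ioc 0 δ) volume :=
          (intervalIntegrable_iff_integrableOn_Ioc_of_le hδpos.le).mp
            ((hgc k).intervalIntegrable 0 δ)
        have h1 : γ k * ‖A k‖ * (c * δ) ≤
            ∫ t in (0:ℝ)..δ, γ k * phiAlpha α (Λ k * t) * ‖A k‖ := by
          rw [intervalIntegral.integral_mul_const, intervalIntegral.integral_const_mul]
          have h2 := hkey k hk
          have hgk := (hγpos k).le
          have ha := norm_nonneg (A k)
          calc γ k * ‖A k‖ * (c * δ)
              = γ k * (c * δ) * ‖A k‖ := by ring
            _ ≤ (γ k * ∫ t in (0:ℝ)..δ, phiAlpha α (Λ k * t)) * ‖A k‖ :=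
                mul_le_mul_of_nonneg_right
                  (mul_le_mul_of_nonneg_left h2 hgk) ha
        rw [← ENNReal.ofReal_mul (mul_nonneg (hγpos k).le (norm_nonneg _))]
        calc ENNReal.ofReal (γ k * ‖A k‖ * (c * δ))
            ≤ ENNReal.ofReal (∫ t in (0:ℝ)..δ,
                γ k * phiAlpha α (Λ k * t) * ‖A k‖) :=
              ENNReal.ofReal_le_ofReal h1
          _ = ∫⁻ t in Set.Ioc 0 δ, g k t := by
              rw [intervalIntegral.integral_of_le hδpos.le,
                ofReal_integral_eq_lintegral_ofReal hint
                  (Filter.Eventually.of_forall (fun t => hgnn k t))]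
      · simp
    calc (∑' k : ℤ, (if (n:ℤ) ≤ |k| then ENNReal.ofReal (γ k * ‖A k‖) else 0)
            * ENNReal.ofReal (c * δ))
        ≤ ∑' k : ℤ, ∫⁻ t in Set.Ioc 0 δ, g k t := ENNReal.tsum_le_tsum hterm
      _ = ∫⁻ t in Set.Ioc 0 δ, ∑' k : ℤ, g k t :=
          (lintegral_tsum (fun k =>
            (ENNReal.measurable_ofReal.comp (hgc k).measurable).aemeasurable)).symm
      _ ≤ ∫⁻ _ in Set.Ioc 0 δ, genMod Λ M A (phiAlpha α) δ := by
          apply setLIntegral_mono' measurableSet_Ioc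
          intro t ht
          have hts : |t| ≤ δ := by rw [abs_of_pos ht.1]; exact ht.2
          exact le_iSup_of_le t (le_iSup_of_le hts
            (le_iSup_of_le γ (le_iSup_of_le hγ le_rfl)))
      _ = genMod Λ M A (phiAlpha α) δ * volume (Set.Ioc 0 δ) := setLIntegral_const _ _
      _ ≤ ENNReal.ofReal (C * ω δ) * ENNReal.ofReal δ := by
          rw [Real.volume_Ioc, sub_zero]
          exact mul_le_mul' (hbound δ hδpos hδδ₀) le_rfl
  have hb0 : ENNReal.ofReal (c * δ) ≠ 0 := by
    simp only [ne_eq, ENNReal.ofReal_eq_zero, not_le]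
    positivity
  have hfin := (ENNReal.le_div_iff_mul_le (Or.inl hb0)
    (Or.inl ENNReal.ofReal_ne_top)).mpr hmain
  calc (∑' k : ℤ, if (n:ℤ) ≤ |k| then ENNReal.ofReal (γ k * ‖A k‖) else 0)
      ≤ ENNReal.ofReal (C * ω δ) * ENNReal.ofReal δ / ENNReal.ofReal (c * δ) := hfin
    _ = ENNReal.ofReal (C / c * ω δ) := by
        rw [← ENNReal.ofReal_mul (by positivity), ← ENNReal.ofReal_div_of_pos (by positivity)]
        congr 1
        field_simp

end
end
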